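/- arXiv:1807.00338 — 8 statements merged into one kernel-verified Lean document; each statement's English description precedes it below -/
import Mathlib

section
/- If P is a κ-closed partial order and D is a family of at most κ dense subsets of P, then there exists a filter Φ in P intersecting every member of D. -/
open Cardinal

universe u

/-- `P` is `κ`-closed: every decreasing sequence indexed by a well-ordered
type of cardinality `< κ` has a lower bound. -/
def KClosedOrder (P : Type u) [PartialOrder P] (κ : Cardinal.{u}) : Prop :=
  ∀ (ι : Type u) [LinearOrder ι] [WellFoundedLT ι], #ι < κ →
    ∀ p : ι → P, Antitone p → ∃ q : P, ∀ j : ι, q ≤ p j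

/-- Auxiliary: transfinite construction of a decreasing sequence hitting each `e i`. -/
theorem stmt_0_aux {P : Type u} [PartialOrder P] (κ : Cardinal.{u})
    (hclosed : KClosedOrder P κ) (hP : Nonempty P)
    (ι : Type u) [LinearOrder ι] [WellFoundedLT ι]
    (hIio : ∀ i : ι, #{j : ι // j < i} < κ)
    (e : ι → Set P) (he : ∀ i, ∀ p : P, ∃ q ∈ e i, q ≤ p) :
    ∃ p : ι → P, (∀ i, p i ∈ e i) ∧ ∀ j i : ι, j < i → p i ≤ p j := by
  classical
  let F : ∀ i : ι, (∀ j, j < i → P) → P := fun i g =>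
    if h : ∃ b : P, ∀ j (hj : j < i), b ≤ g j hj then
      Classical.choose (he i (Classical.choose h))
    else Classical.choice hP
  let p : ι → P := IsWellFounded.fix (· < ·) F
  have hp_eq : ∀ i, p i = F i (fun j _ => p j) := fun i =>
    IsWellFounded.fix_eq (· < ·) F i
  have key : ∀ i : ι, p i ∈ e i ∧ ∀ j, j < i → p i ≤ p j := by
    intro i
    refine IsWellFounded.induction (α := ι) (· < ·)
      (motive := fun i => p i ∈ e i ∧ ∀ j, j < i → p i ≤ p j) i ?_
    clear i
    intro i IH
    have hex : ∃ b : P, ∀ j (hj : j < i), b ≤ p j := by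
      have anti : Antitone (fun j : {j : ι // j < i} => p j.1) := by
        intro j j' hjj'
        rcases lt_or_eq_of_le hjj' with h | h
        · exact (IH j'.1 j'.2).2 j.1 h
        · rw [h]
      obtain ⟨b, hb⟩ := hclosed {j : ι // j < i} (hIio i)
        (fun j => p j.1) anti
      exact ⟨b, fun j hj => hb ⟨j, hj⟩⟩
    have hpi : p i = Classical.choose (he i (Classical.choose hex)) := by
      rw [hp_eq i]
      simp only [F, dif_pos hex]
    have hspec := Classical.choose_spec (he i (Classical.choose hex))
    constructor
    · rw [hpi]; exact hspec.1
    · intro j hj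
      rw [hpi]
      exact hspec.2.trans (Classical.choose_spec hex j hj)
  exact ⟨p, fun i => (key i).1, fun j i hji => (key i).2 j hji⟩

theorem stmt_0 {P : Type u} [PartialOrder P] (κ : Cardinal.{u}) (hκ : ℵ₀ ≤ κ)
    (hclosed : KClosedOrder P κ)
    (D : Set (Set P)) (hD : #D ≤ κ)
    (hdense : ∀ d ∈ D, ∀ p : P, ∃ q ∈ d, q ≤ p) :
    ∃ Φ : Set P,
      (∀ p ∈ Φ, ∀ q : P, p ≤ q → q ∈ Φ) ∧
      (∀ p ∈ Φ, ∀ q ∈ Φ, ∃ r ∈ Φ, r ≤ p ∧ r ≤ q) ∧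
      ∀ d ∈ D, (Φ ∩ d).Nonempty := by
  classical
  have hcardι : #(κ.ord.ToType) = κ := Cardinal.mk_ord_toType κ
  -- P is nonempty
  have hP : Nonempty P := by
    haveI : WellFoundedLT (ULift.{u} (Fin 0)) := ⟨⟨fun a => a.down.elim0⟩⟩
    have h0 : #(ULift.{u} (Fin 0)) < κ := by
      simp only [Cardinal.mk_eq_zero, Cardinal.mk_fintype, Fintype.card_fin,
        Nat.cast_zero, Cardinal.mk_uLift]
      exact aleph0_pos.trans_le hκ
    obtain ⟨q, -⟩ := hclosed (ULift.{u} (Fin 0)) h0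
      (fun x => x.down.elim0) (fun a => a.down.elim0)
    exact ⟨q⟩
  -- enumeration of D
  obtain ⟨e, he1, he2⟩ : ∃ e : κ.ord.ToType → Set P,
      (∀ i, ∀ p : P, ∃ q ∈ e i, q ≤ p) ∧ (∀ d ∈ D, ∃ i, e i = d) := by
    rcases D.eq_empty_or_nonempty with hDe | ⟨d0, hd0⟩
    · exact ⟨fun _ => Set.univ, fun i p => ⟨p, trivial, le_rfl⟩,
        fun d hd => by simp [hDe] at hd⟩
    · haveI : Nonempty D := ⟨⟨d0, hd0⟩⟩
      obtain ⟨f⟩ := Cardinal.le_def _ _ |>.mp (hD.trans_eq hcardι.symm)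
      let g : κ.ord.ToType → D := Function.invFun ⇑f
      refine ⟨fun i => (g i : Set P), fun i p => hdense _ (g i).2 p, fun d hd => ?_⟩
      obtain ⟨i, hi⟩ := Function.invFun_surjective f.injective ⟨d, hd⟩
      exact ⟨i, congrArg Subtype.val hi⟩
  -- cardinality of initial segments
  have hIio : ∀ i : κ.ord.ToType, #{j : κ.ord.ToType // j < i} < κ := by
    intro i
    haveI : IsWellOrder κ.ord.ToType (· < ·) := isWellOrder_lt
    have h := Cardinal.card_typein_lt (r := (· < ·)) i (by rw [hcardι, Ordinal.type_toType])
    rw [Ordinal.card_typein] at h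
    exact h.trans_le hcardι.le
  obtain ⟨p, hpmem, hpdec⟩ := stmt_0_aux κ hclosed hP κ.ord.ToType hIio e he1
  have hanti : ∀ j i : κ.ord.ToType, j ≤ i → p i ≤ p j := by
    intro j i hji
    rcases lt_or_eq_of_le hji with h | h
    · exact hpdec j i h
    · rw [h]
  refine ⟨{x | ∃ i, p i ≤ x}, ?_, ?_, ?_⟩
  · rintro x ⟨i, hi⟩ q hxq
    exact ⟨i, hi.trans hxq⟩
  · rintro x ⟨i, hi⟩ y ⟨j, hj⟩
    exact ⟨p (max i j), ⟨max i j, le_rfl⟩,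
      (hanti i _ (le_max_left i j)).trans hi,
      (hanti j _ (le_max_right i j)).trans hj⟩
  · intro d hd
    obtain ⟨i, hi⟩ := he2 d hd
    exact ⟨p i, ⟨i, le_rfl⟩, hi ▸ hpmem i⟩
end

section
/- Let X be a relational structure of infinite cardinality κ. X is not reversible if and only if there exists a κ-closed back-and-forth system Π of partial self-condensations of X containing a bad finite partial condensation, i.e., a finite partial condensation not extendable to any automorphism of X. -/
open Cardinal

universe u v

/-- A relational language: a set of relation symbols with arities. -/
structure RelLang : Type 1 where
  I : Type
  arity : I → ℕ

/-- A structure for the relational language `L` with domain `X`. -/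
structure RelStr (L : RelLang) (X : Type u) : Type u where
  rel : ∀ i : L.I, Set (Fin (L.arity i) → X)

variable {L : RelLang}

/-- `f ⊆ X × Y` is (the graph of) a partial condensation from `A` to `B`:
an injective partial function preserving all relations forward. -/
def IsPCond {X : Type u} {Y : Type v} (A : RelStr L X) (B : RelStr L Y)
    (f : Set (X × Y)) : Prop :=
  (∀ p ∈ f, ∀ q ∈ f, p.1 = q.1 → p.2 = q.2) ∧
  (∀ p ∈ f, ∀ q ∈ f, p.2 = q.2 → p.1 = q.1) ∧
  (∀ i : L.I, ∀ xs : Fin (L.arity i) → X, ∀ ys : Fin (L.arity i) → Y,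
    (∀ k, (xs k, ys k) ∈ f) → xs ∈ A.rel i → ys ∈ B.rel i)

/-- A back-and-forth system of partial condensations from `A` to `B`. -/
def IsBFS {X : Type u} {Y : Type v} (A : RelStr L X) (B : RelStr L Y)
    (S : Set (Set (X × Y))) : Prop :=
  S.Nonempty ∧ (∀ f ∈ S, IsPCond A B f) ∧
  (∀ f ∈ S, ∀ x : X, ∃ g ∈ S, f ⊆ g ∧ ∃ y : Y, (x, y) ∈ g) ∧
  (∀ f ∈ S, ∀ y : Y, ∃ g ∈ S, f ⊆ g ∧ ∃ x : X, (x, y) ∈ g)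

/-- A condensation: a bijective homomorphism from `A` onto `B`. -/
def IsCond {X : Type u} {Y : Type v} (A : RelStr L X) (B : RelStr L Y)
    (F : X → Y) : Prop :=
  Function.Bijective F ∧
  ∀ i : L.I, ∀ xs : Fin (L.arity i) → X, xs ∈ A.rel i → (fun k => F (xs k)) ∈ B.rel i

/-- The poset `(S, ⊇)` is `κ`-closed: every `⊆`-increasing chain indexed by a
well-ordered type of cardinality `< κ` has an upper bound in `S`. -/
def KClosedSystem {α : Type u} (κ : Cardinal.{u}) (S : Set (Set α)) : Prop :=
  ∀ (ι : Type u) [LinearOrder ι] [WellFoundedLT ι], #ι < κ →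
    ∀ c : ι → Set α, (∀ j, c j ∈ S) → (∀ j k : ι, j ≤ k → c j ⊆ c k) →
      ∃ g ∈ S, ∀ j, c j ⊆ g

/-- An automorphism of `A`: a bijection preserving and reflecting all relations. -/
def IsAuto {X : Type u} (A : RelStr L X) (F : X → X) : Prop :=
  Function.Bijective F ∧
  ∀ i : L.I, ∀ xs : Fin (L.arity i) → X, xs ∈ A.rel i ↔ (fun k => F (xs k)) ∈ A.rel i

theorem key {X : Type u} [LinearOrder X] [WellFoundedLT X] [Nonempty X]
    (A : RelStr L X) (κ : Cardinal.{u})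
    (hcard : ∀ x : X, #(Set.Iio x) < κ)
    (S : Set (Set (X × X))) (hS : IsBFS A A S) (hk : KClosedSystem κ S)
    (f₀ : Set (X × X)) (hf₀ : f₀ ∈ S) :
    ∃ F : X → X, IsCond A A F ∧ ∀ p ∈ f₀, F p.1 = p.2 := by
  obtain ⟨-, hpc, he1, he2⟩ := hS
  -- step existence
  have step : ∀ (x : X) (prev : ∀ y, y < x → Set (X × X)),
      ∃ s : Set (X × X),
        ((∀ y hy, prev y hy ∈ S ∧ f₀ ⊆ prev y hy) ∧
          (∀ y₁ h₁ y₂ h₂, y₁ ≤ y₂ → prev y₁ h₁ ⊆ prev y₂ h₂)) →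
        (s ∈ S ∧ f₀ ⊆ s ∧ (∀ y hy, prev y hy ⊆ s) ∧
          (∃ b, (x, b) ∈ s) ∧ (∃ a, (a, x) ∈ s)) := by
    intro x prev
    by_cases H : (∀ y hy, prev y hy ∈ S ∧ f₀ ⊆ prev y hy) ∧
        (∀ y₁ h₁ y₂ h₂, y₁ ≤ y₂ → prev y₁ h₁ ⊆ prev y₂ h₂)
    · obtain ⟨H1, H2⟩ := H
      have hub : ∃ h ∈ S, f₀ ⊆ h ∧ ∀ y hy, prev y hy ⊆ h := by
        by_cases hne : ∃ y : X, y < x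
        · obtain ⟨g, hgS, hgub⟩ := hk (↥(Set.Iio x)) (hcard x)
            (fun y => prev y.1 y.2) (fun j => (H1 j.1 j.2).1)
            (fun j k hjk => H2 j.1 j.2 k.1 k.2 hjk)
          obtain ⟨y₀, hy₀⟩ := hne
          exact ⟨g, hgS, (H1 y₀ hy₀).2.trans (hgub ⟨y₀, hy₀⟩),
            fun y hy => hgub ⟨y, hy⟩⟩
        · exact ⟨f₀, hf₀, subset_rfl, fun y hy => absurd ⟨y, hy⟩ hne⟩
      obtain ⟨h, hhS, hfh, hub'⟩ := hub
      obtain ⟨g₁, hg₁S, hsub₁, b, hb⟩ := he1 h hhS x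
      obtain ⟨g₂, hg₂S, hsub₂, a, ha⟩ := he2 g₁ hg₁S x
      exact ⟨g₂, fun _ => ⟨hg₂S, (hfh.trans hsub₁).trans hsub₂,
        fun y hy => ((hub' y hy).trans hsub₁).trans hsub₂,
        ⟨b, hsub₂ hb⟩, ⟨a, ha⟩⟩⟩
    · exact ⟨f₀, fun h => absurd h H⟩
  -- transfinite recursion
  let g : X → Set (X × X) :=
    WellFoundedLT.fix (fun x prev => Classical.choose (step x prev))
  have geq : ∀ x, g x = Classical.choose (step x (fun y _ => g y)) :=
    WellFoundedLT.fix_eq (fun x prev => Classical.choose (step x prev))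
  have inv : ∀ x : X, g x ∈ S ∧ f₀ ⊆ g x ∧ (∀ y, (hy : y < x) → g y ⊆ g x) ∧
      (∃ b, (x, b) ∈ g x) ∧ (∃ a, (a, x) ∈ g x) := by
    intro x
    induction x using WellFoundedLT.induction with
    | ind x ih =>
      have H : (∀ y (hy : y < x), (fun y (_ : y < x) => g y) y hy ∈ S ∧
            f₀ ⊆ (fun y (_ : y < x) => g y) y hy) ∧
          (∀ y₁ (h₁ : y₁ < x) y₂ (h₂ : y₂ < x), y₁ ≤ y₂ →
            (fun y (_ : y < x) => g y) y₁ h₁ ⊆ (fun y (_ : y < x) => g y) y₂ h₂) := by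
        refine ⟨fun y hy => ⟨(ih y hy).1, (ih y hy).2.1⟩, fun y₁ h₁ y₂ h₂ hle => ?_⟩
        rcases lt_or_eq_of_le hle with hlt | rfl
        · exact (ih y₂ h₂).2.2.1 y₁ hlt
        · exact subset_rfl
      have := Classical.choose_spec (step x (fun y _ => g y)) H
      rw [geq x]
      exact ⟨this.1, this.2.1, this.2.2.1, this.2.2.2⟩
  have mono : ∀ y x : X, y ≤ x → g y ⊆ g x := by
    intro y x hle
    rcases lt_or_eq_of_le hle with hlt | rfl
    · exact (inv x).2.2.1 y hlt
    · exact subset_rfl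
  -- the total function
  have total : ∀ a : X, ∃ b, ∃ x, (a, b) ∈ g x := fun a =>
    let ⟨b, hb⟩ := (inv a).2.2.2.1; ⟨b, a, hb⟩
  let F : X → X := fun a => Classical.choose (total a)
  have hF : ∀ a, ∃ x, (a, F a) ∈ g x := fun a => Classical.choose_spec (total a)
  have common : ∀ {p q : X × X}, (∃ x, p ∈ g x) → (∃ x, q ∈ g x) →
      ∃ x, p ∈ g x ∧ q ∈ g x := by
    rintro p q ⟨x, hx⟩ ⟨y, hy⟩
    exact ⟨max x y, mono x _ (le_max_left x y) hx, mono y _ (le_max_right x y) hy⟩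
  have func : ∀ {a b b' : X}, (∃ x, (a, b) ∈ g x) → (∃ x, (a, b') ∈ g x) → b = b' := by
    intro a b b' h1 h2
    obtain ⟨x, hx1, hx2⟩ := common h1 h2
    exact (hpc (g x) (inv x).1).1 (a, b) hx1 (a, b') hx2 rfl
  have injf : ∀ {a a' b : X}, (∃ x, (a, b) ∈ g x) → (∃ x, (a', b) ∈ g x) → a = a' := by
    intro a a' b h1 h2
    obtain ⟨x, hx1, hx2⟩ := common h1 h2
    exact (hpc (g x) (inv x).1).2.1 (a, b) hx1 (a', b) hx2 rfl
  refine ⟨F, ⟨⟨fun a a' hFa => ?_, fun b => ?_⟩, fun i xs hxs => ?_⟩, fun p hp => ?_⟩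
  · exact injf (hF a) (hFa ▸ hF a')
  · obtain ⟨a, ha⟩ := (inv b).2.2.2.2
    exact ⟨a, func (hF a) ⟨b, ha⟩⟩
  · -- relations
    have hidx : ∀ k : Fin (L.arity i), ∃ x, (xs k, F (xs k)) ∈ g x := fun k => hF (xs k)
    choose idx hidx' using hidx
    obtain ⟨M, hM⟩ := (Finset.univ.image idx).exists_le
    have hall : ∀ k, (xs k, F (xs k)) ∈ g M := fun k =>
      mono (idx k) M (hM _ (Finset.mem_image_of_mem idx (Finset.mem_univ k))) (hidx' k)
    exact (hpc (g M) (inv M).1).2.2 i xs (fun k => F (xs k)) hall hxs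
  · have hp' : ∃ x, (p.1, p.2) ∈ g x := ⟨p.1, (inv p.1).2.1 hp⟩
    exact func (hF p.1) hp'

theorem stmt_4 {X : Type u} (A : RelStr L X) (κ : Cardinal.{u})
    (hκ : ℵ₀ ≤ κ) (hX : #X = κ) :
    (¬ ∀ F : X → X, IsCond A A F → IsAuto A F) ↔
      ∃ S : Set (Set (X × X)), IsBFS A A S ∧ KClosedSystem κ S ∧
        ∃ f ∈ S, f.Finite ∧
          ¬ ∃ F : X → X, IsAuto A F ∧ ∀ p ∈ f, F p.1 = p.2 := by
  constructor
  · -- forward: from a non-automorphism condensation, build the system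
    intro h
    push_neg at h
    obtain ⟨F, hcond, hnauto⟩ := h
    obtain ⟨hbij, hrel⟩ := hcond
    -- find a witness relation
    have : ∃ i : L.I, ∃ xs : Fin (L.arity i) → X,
        xs ∉ A.rel i ∧ (fun k => F (xs k)) ∈ A.rel i := by
      by_contra hc
      push_neg at hc
      exact hnauto ⟨hbij, fun i xs =>
        ⟨fun hx => hrel i xs hx, fun hy => by
          by_contra hx
          exact (hc i xs hx) hy⟩⟩
    obtain ⟨i, xs, hxs, hFxs⟩ := this
    set G : Set (X × X) := {p : X × X | p.2 = F p.1} with hG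
    refine ⟨{s | s ⊆ G}, ⟨⟨∅, by simp⟩, ?_, ?_, ?_⟩, ?_, ?_⟩
    · -- every subset of G is a partial condensation
      intro f hfG
      refine ⟨fun p hp q hq h1 => ?_, fun p hp q hq h2 => ?_, fun j as bs hab ha => ?_⟩
      · have := hfG hp; have := hfG hq
        simp only [hG, Set.mem_setOf_eq] at *
        rw [‹p.2 = F p.1›, ‹q.2 = F q.1›, h1]
      · have hp' := hfG hp; have hq' := hfG hq
        simp only [hG, Set.mem_setOf_eq] at hp' hq'
        exact hbij.1 (by rw [← hp', ← hq', h2])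
      · have hbs : bs = fun k => F (as k) := by
          funext k
          exact hfG (hab k)
        rw [hbs]
        exact hrel j as ha
    · -- extension on domain
      intro f hf x
      exact ⟨insert (x, F x) f, Set.insert_subset rfl hf,
        Set.subset_insert _ _, F x, Set.mem_insert _ _⟩
    · -- extension on range
      intro f hf y
      obtain ⟨x, hx⟩ := hbij.2 y
      exact ⟨insert (x, y) f, Set.insert_subset hx.symm hf,
        Set.subset_insert _ _, x, Set.mem_insert _ _⟩
    · -- κ-closed
      intro ι _ _ _ c hc _
      exact ⟨G, fun _ h => h, fun j => hc j⟩
    · -- the bad finite condensation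
      refine ⟨Set.range (fun k => (xs k, F (xs k))), ?_, Set.finite_range _, ?_⟩
      · rintro p ⟨k, rfl⟩; rfl
      · rintro ⟨H, hHauto, hHxs⟩
        have : (fun k => H (xs k)) = fun k => F (xs k) := by
          funext k
          exact hHxs (xs k, F (xs k)) ⟨k, rfl⟩
        exact hxs ((hHauto.2 i xs).2 (this ▸ hFxs))
  · -- backward: build a condensation extending the bad map
    rintro ⟨S, hS, hk, f₀, hf₀S, -, hbad⟩ hall
    have hXeq : #X = #(κ.ord.ToType) := by rw [hX, mk_ord_toType]
    obtain ⟨e⟩ := Cardinal.eq.mp hXeq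
    letI : LinearOrder X := LinearOrder.lift' e e.injective
    haveI : WellFoundedLT X := ⟨InvImage.wf e wellFounded_lt⟩
    haveI : Nonempty X := Cardinal.mk_ne_zero_iff.mp
      (by rw [hX]; exact ne_of_gt (lt_of_lt_of_le aleph0_pos hκ))
    have hcard : ∀ x : X, #(Set.Iio x) < κ := by
      intro x
      have heq : #(Set.Iio x) = #(Set.Iio (e x)) :=
        Cardinal.mk_congr (Equiv.subtypeEquiv e (fun y => Iff.rfl))
      rw [heq]
      exact mk_Iio_ord_toType (e x)
    obtain ⟨F, hFcond, hFext⟩ := key A κ hcard S hS hk f₀ hf₀S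
    exact hbad ⟨F, hall F hFcond, hFext⟩
end

section
/- Let X be a countable relational structure. X is not reversible if and only if there exists a back-and-forth system of partial self-condensations of X containing a finite partial condensation that does not extend to any automorphism of X. -/
open Cardinal

universe u v

variable {L : RelLang}

lemma pcond_mono {X : Type u} {Y : Type v} (A : RelStr L X) (B : RelStr L Y)
    {f g : Set (X × Y)} (hfg : f ⊆ g) (hg : IsPCond A B g) : IsPCond A B f :=
  ⟨fun p hp q hq => hg.1 p (hfg hp) q (hfg hq),
   fun p hp q hq => hg.2.1 p (hfg hp) q (hfg hq),
   fun i xs ys h => hg.2.2 i xs ys (fun k => hfg (h k))⟩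

lemma bfs_extend {X : Type u} [Countable X] (A : RelStr L X)
    {S : Set (Set (X × X))} (hS : IsBFS A A S) {f : Set (X × X)} (hf : f ∈ S) :
    ∃ F : X → X, IsCond A A F ∧ ∀ p ∈ f, F p.1 = p.2 := by
  obtain ⟨-, hpc, hforth, hback⟩ := hS
  by_cases hX : Nonempty X
  · obtain ⟨e, he⟩ := exists_surjective_nat X
    choose G hGS hGsub yv hy using hforth
    choose H hHS hHsub xv hx using hback
    let chain : ℕ → {t : Set (X × X) // t ∈ S} := fun n =>
      Nat.rec ⟨f, hf⟩ (fun n p =>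
        ⟨H (G p.1 p.2 (e n)) (hGS p.1 p.2 (e n)) (e n), hHS _ _ _⟩) n
    have hchain_succ : ∀ n, (chain n).1 ⊆ (chain (n+1)).1 := fun n =>
      (hGsub (chain n).1 (chain n).2 (e n)).trans (hHsub _ _ _)
    have hmono : ∀ m n, m ≤ n → (chain m).1 ⊆ (chain n).1 := by
      intro m n h
      induction h with
      | refl => exact subset_rfl
      | step h ih => exact ih.trans (hchain_succ _)
    set U : Set (X × X) := ⋃ n, (chain n).1 with hU
    have hmemU : ∀ {p : X × X} {n : ℕ}, p ∈ (chain n).1 → p ∈ U :=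
      fun {p n} h => Set.mem_iUnion.2 ⟨n, h⟩
    have hUpc : IsPCond A A U := by
      refine ⟨?_, ?_, ?_⟩
      · rintro p hp q hq h
        obtain ⟨n, hn⟩ := Set.mem_iUnion.1 hp
        obtain ⟨m, hm⟩ := Set.mem_iUnion.1 hq
        exact (hpc _ (chain (max n m)).2).1 p (hmono n _ (le_max_left n m) hn)
          q (hmono m _ (le_max_right n m) hm) h
      · rintro p hp q hq h
        obtain ⟨n, hn⟩ := Set.mem_iUnion.1 hp
        obtain ⟨m, hm⟩ := Set.mem_iUnion.1 hq
        exact (hpc _ (chain (max n m)).2).2.1 p (hmono n _ (le_max_left n m) hn)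
          q (hmono m _ (le_max_right n m) hm) h
      · intro i xs ys hk hxs
        have : ∀ k, ∃ n, (xs k, ys k) ∈ (chain n).1 :=
          fun k => Set.mem_iUnion.1 (hk k)
        choose m hm using this
        exact (hpc _ (chain (Finset.univ.sup m)).2).2.2 i xs ys
          (fun k => hmono (m k) _ (Finset.le_sup (Finset.mem_univ k)) (hm k)) hxs
    have htot : ∀ x : X, ∃ y, (x, y) ∈ U := by
      intro x
      obtain ⟨n, rfl⟩ := he x
      exact ⟨yv (chain n).1 (chain n).2 (e n),
        hmemU (n := n+1) (hHsub _ (hGS _ _ _) (e n) (hy (chain n).1 (chain n).2 (e n)))⟩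
    have hsur : ∀ y : X, ∃ x, (x, y) ∈ U := by
      intro y
      obtain ⟨n, rfl⟩ := he y
      exact ⟨xv (G (chain n).1 (chain n).2 (e n)) (hGS _ _ _) (e n),
        hmemU (p := _) (n := n + 1) (hx _ _ (e n))⟩
    choose F hF using htot
    refine ⟨F, ⟨⟨?_, ?_⟩, ?_⟩, ?_⟩
    · intro a b hab
      exact hUpc.2.1 (a, F a) (hF a) (b, F b) (hF b) (by simpa using hab)
    · intro y
      obtain ⟨x, hx'⟩ := hsur y
      exact ⟨x, hUpc.1 (x, F x) (hF x) (x, y) hx' rfl⟩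
    · intro i xs hxs
      exact hUpc.2.2 i xs _ (fun k => hF (xs k)) hxs
    · intro p hp
      have hp' : p ∈ U := hmemU (n := 0) hp
      exact hUpc.1 (p.1, F p.1) (hF p.1) p hp' rfl
  · refine ⟨id, ⟨Function.bijective_id, fun i xs hxs => hxs⟩, fun p hp => (hX ⟨p.1⟩).elim⟩

theorem stmt_5 {X : Type u} [Countable X] (A : RelStr L X) :
    (¬ ∀ F : X → X, IsCond A A F → IsAuto A F) ↔
      ∃ S : Set (Set (X × X)), IsBFS A A S ∧
        ∃ f ∈ S, f.Finite ∧
          ¬ ∃ F : X → X, IsAuto A F ∧ ∀ p ∈ f, F p.1 = p.2 := by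
  constructor
  · intro h
    push_neg at h
    obtain ⟨F, ⟨hbij, hhom⟩, hnauto⟩ := h
    have hkey : ∃ i xs, xs ∉ A.rel i ∧ (fun k => F (xs k)) ∈ A.rel i := by
      by_contra hc
      push_neg at hc
      refine hnauto ⟨hbij, fun i xs => ⟨hhom i xs, fun hFxs => ?_⟩⟩
      by_contra hn
      exact hc i xs hn hFxs
    obtain ⟨i, xs, hP, hQ⟩ := hkey
    set graphF : Set (X × X) := {p : X × X | F p.1 = p.2} with hgF
    set f : Set (X × X) := Set.range (fun k => (xs k, F (xs k))) with hff
    have hfsub : f ⊆ graphF := by rintro p ⟨k, rfl⟩; rfl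
    have hgpc : IsPCond A A graphF := by
      refine ⟨?_, ?_, ?_⟩
      · rintro p hp q hq h
        simp only [hgF, Set.mem_setOf_eq] at hp hq
        rw [← hp, ← hq, h]
      · rintro p hp q hq h
        simp only [hgF, Set.mem_setOf_eq] at hp hq
        exact hbij.1 (by rw [hp, hq, h])
      · intro j as bs hk has
        have : bs = fun k => F (as k) := funext fun k => (hk k).symm
        rw [this]
        exact hhom j as has
    refine ⟨{f, graphF}, ⟨⟨f, Or.inl rfl⟩, ?_, ?_, ?_⟩, f, Or.inl rfl,
      Set.finite_range _, ?_⟩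
    · rintro t (rfl | rfl)
      · exact pcond_mono A A hfsub hgpc
      · exact hgpc
    · rintro t ht x
      refine ⟨graphF, Or.inr rfl, ?_, F x, rfl⟩
      rcases ht with rfl | rfl
      · exact hfsub
      · exact subset_rfl
    · rintro t ht y
      obtain ⟨x, rfl⟩ := hbij.2 y
      refine ⟨graphF, Or.inr rfl, ?_, x, rfl⟩
      rcases ht with rfl | rfl
      · exact hfsub
      · exact subset_rfl
    · rintro ⟨G, ⟨hGbij, hGrel⟩, hext⟩
      have hGF : (fun k => G (xs k)) = fun k => F (xs k) :=
        funext fun k => hext _ ⟨k, rfl⟩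
      exact hP ((hGrel i xs).2 (hGF ▸ hQ))
  · rintro ⟨S, hBFS, f, hfS, hffin, hnext⟩ h
    obtain ⟨F, hF, hext⟩ := bfs_extend A hBFS hfS
    exact hnext ⟨F, h F hF, hext⟩
end

section
/- Let P = ⟨P, <⟩ be a strict partial order of infinite size κ such that (u1) for all nonempty sets L, G of size < κ with L < G there is x with L < x < G. Then for all nonempty L, G of size < κ with L < G, the set {x ∈ P : L < x < G} has size κ. -/
open Cardinal

universe u

theorem stmt_6 {P : Type u} [PartialOrder P] (κ : Cardinal.{u})
    (hκ : ℵ₀ ≤ κ) (hP : #P = κ)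
    (u1 : ∀ L G : Set P, L.Nonempty → G.Nonempty → #L < κ → #G < κ →
      (∀ a ∈ L, ∀ b ∈ G, a < b) →
      ∃ x : P, (∀ a ∈ L, a < x) ∧ ∀ b ∈ G, x < b) :
    ∀ L G : Set P, L.Nonempty → G.Nonempty → #L < κ → #G < κ →
      (∀ a ∈ L, ∀ b ∈ G, a < b) →
      #{x : P | (∀ a ∈ L, a < x) ∧ ∀ b ∈ G, x < b} = κ := by
  intro L G hL hG hLκ hGκ hLG
  set S : Set P := {x : P | (∀ a ∈ L, a < x) ∧ ∀ b ∈ G, x < b} with hS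
  have hle : #S ≤ κ := hP ▸ (mk_set_le S)
  rcases lt_or_eq_of_le hle with hlt | heq
  · exfalso
    have hunion : #(↥(L ∪ S)) < κ := by
      refine lt_of_le_of_lt (mk_union_le L S) ?_
      exact Cardinal.add_lt_of_lt hκ hLκ hlt
    have hord : ∀ a ∈ L ∪ S, ∀ b ∈ G, a < b := by
      rintro a (ha | ha) b hb
      · exact hLG a ha b hb
      · exact ha.2 b hb
    obtain ⟨x, hx1, hx2⟩ := u1 (L ∪ S) G (hL.mono Set.subset_union_left) hG hunion hGκ hord
    have hxS : x ∈ S := ⟨fun a ha => hx1 a (Or.inl ha), hx2⟩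
    exact lt_irrefl x (hx1 x (Or.inr hxS))
  · exact heq
end

section
/- Let P = ⟨P, <⟩ be a strict partial order of regular infinite cardinality κ satisfying (u1) and (u2). Then P is not reversible: there exists a bijective homomorphism F : P → P that is not an automorphism. -/
open Cardinal

universe u

/-- `p` and `q` are incomparable. -/
def Incomp {P : Type u} [PartialOrder P] (p q : P) : Prop := ¬ p < q ∧ ¬ q < p

namespace Stmt8Aux

open scoped Classical

variable {P : Type u} [PartialOrder P]

/-- A set of pairs is good if it is the graph of a partial injective order homomorphism. -/
def Good (S : Set (P × P)) : Prop :=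
  (∀ q₁ ∈ S, ∀ q₂ ∈ S, q₁.1 = q₂.1 → q₁.2 = q₂.2) ∧
  (∀ q₁ ∈ S, ∀ q₂ ∈ S, q₁.2 = q₂.2 → q₁.1 = q₂.1) ∧
  (∀ q₁ ∈ S, ∀ q₂ ∈ S, q₁.1 < q₂.1 → q₁.2 < q₂.2)

noncomputable def forthC [Nonempty P] (S : Set (P × P)) (r : P) : P :=
  if h : ∃ x : P, x ∉ Prod.snd '' S ∧ (∀ q ∈ S, q.1 < r → q.2 < x) ∧
      (∀ q ∈ S, r < q.1 → x < q.2) then h.choose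
  else Classical.arbitrary P

noncomputable def backC [Nonempty P] (S : Set (P × P)) : P :=
  if h : ∃ z : P, z ∉ Prod.fst '' S ∧ ∀ q ∈ S, Incomp z q.1 then h.choose
  else Classical.arbitrary P

noncomputable def ext1 [Nonempty P] (S : Set (P × P)) (r : P) : Set (P × P) :=
  if r ∈ Prod.fst '' S then S else insert (r, forthC S r) S

noncomputable def ext2 [Nonempty P] (S : Set (P × P)) (r : P) : Set (P × P) :=
  if r ∈ Prod.snd '' (ext1 S r) then ext1 S r else insert (backC (ext1 S r), r) (ext1 S r)

noncomputable def T [Nonempty P] (κ : Cardinal.{u}) (e : κ.ord.ToType → P) (I : Set (P × P)) :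
    κ.ord.ToType → Set (P × P) :=
  wellFounded_lt.fix fun i IH => ext2 (I ∪ ⋃ j, ⋃ h : j < i, IH j h) (e i)

variable [Nonempty P]

lemma subset_ext1 (S : Set (P × P)) (r : P) : S ⊆ ext1 S r := by
  unfold ext1; split
  · exact subset_rfl
  · exact Set.subset_insert _ _

lemma subset_ext2 (S : Set (P × P)) (r : P) : S ⊆ ext2 S r := by
  unfold ext2; split
  · exact subset_ext1 S r
  · exact (subset_ext1 S r).trans (Set.subset_insert _ _)

lemma T_eq (κ : Cardinal.{u}) (e : κ.ord.ToType → P) (I : Set (P × P)) (i : κ.ord.ToType) :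
    T κ e I i = ext2 (I ∪ ⋃ j, ⋃ _ : j < i, T κ e I j) (e i) :=
  wellFounded_lt.fix_eq _ i

lemma subset_T (κ : Cardinal.{u}) (e : κ.ord.ToType → P) (I : Set (P × P)) (i : κ.ord.ToType) :
    I ⊆ T κ e I i := by
  rw [T_eq]
  exact Set.subset_union_left.trans (subset_ext2 _ _)

lemma T_mono (κ : Cardinal.{u}) (e : κ.ord.ToType → P) (I : Set (P × P))
    {j i : κ.ord.ToType} (h : j ≤ i) : T κ e I j ⊆ T κ e I i := by
  rcases eq_or_lt_of_le h with rfl | h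
  · exact subset_rfl
  · rw [T_eq κ e I i]
    refine subset_trans ?_ (subset_ext2 _ _)
    refine subset_trans ?_ Set.subset_union_right
    intro x hx
    exact Set.mem_iUnion₂.2 ⟨j, h, hx⟩

section Exists

variable (κ : Cardinal.{u}) (hκ : ℵ₀ ≤ κ) (hP : #P = κ)
variable (u1 : ∀ L G : Set P, L.Nonempty → G.Nonempty → #L < κ → #G < κ →
      (∀ a ∈ L, ∀ b ∈ G, a < b) →
      ∃ x : P, (∀ a ∈ L, a < x) ∧ ∀ b ∈ G, x < b)
variable (u2 : ∀ K : Set P, K.Nonempty → #K < κ →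
      ∃ x y z : P, (∀ k ∈ K, x < k) ∧ (∀ k ∈ K, k < y) ∧ ∀ k ∈ K, Incomp z k)

include hκ hP u1 u2 in
lemma forth_ex (S : Set (P × P)) (hG : Good S) (hcard : #S < κ) (r : P) :
    ∃ x : P, x ∉ Prod.snd '' S ∧ (∀ q ∈ S, q.1 < r → q.2 < x) ∧
      (∀ q ∈ S, r < q.1 → x < q.2) := by
  set Mid : Set P := {x | (∀ q ∈ S, q.1 < r → q.2 < x) ∧ (∀ q ∈ S, r < q.1 → x < q.2)} with hMid
  set L : Set P := Prod.snd '' {q ∈ S | q.1 < r} with hLdef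
  set G : Set P := Prod.snd '' {q ∈ S | r < q.1} with hGdef
  have hLcard : #L < κ :=
    lt_of_le_of_lt ((mk_image_le).trans (mk_le_mk_of_subset (Set.sep_subset _ _))) hcard
  have hGcard : #G < κ :=
    lt_of_le_of_lt ((mk_image_le).trans (mk_le_mk_of_subset (Set.sep_subset _ _))) hcard
  have key : ¬ #Mid < κ := by
    intro hMidcard
    by_cases hL : L.Nonempty <;> by_cases hG' : G.Nonempty
    · -- both nonempty : use u1
      have hLG : ∀ a ∈ L, ∀ b ∈ G ∪ Mid, a < b := by
        rintro a ⟨q, ⟨hq, hq1⟩, rfl⟩ b hb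
        rcases hb with hb | hb
        · obtain ⟨q', ⟨hq', hq'1⟩, rfl⟩ := hb
          exact hG.2.2 q hq q' hq' (hq1.trans hq'1)
        · exact hb.1 q hq hq1
      obtain ⟨x, hx1, hx2⟩ := u1 L (G ∪ Mid) hL (hG'.mono Set.subset_union_left) hLcard
        (lt_of_le_of_lt (mk_union_le _ _) (add_lt_of_lt hκ hGcard hMidcard)) hLG
      have hxMid : x ∈ Mid := by
        constructor
        · intro q hq hlt
          exact hx1 q.2 ⟨q, ⟨hq, hlt⟩, rfl⟩
        · intro q hq hlt
          exact hx2 q.2 (Or.inl ⟨q, ⟨hq, hlt⟩, rfl⟩)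
      exact lt_irrefl x (hx2 x (Or.inr hxMid))
    · -- L nonempty, G empty : use u2 to get something above
      obtain ⟨x, y, z, _, hy, _⟩ := u2 (L ∪ Mid) (hL.mono Set.subset_union_left)
        (lt_of_le_of_lt (mk_union_le _ _) (add_lt_of_lt hκ hLcard hMidcard))
      have hyMid : y ∈ Mid := by
        constructor
        · intro q hq hlt
          exact hy q.2 (Or.inl ⟨q, ⟨hq, hlt⟩, rfl⟩)
        · intro q hq hlt
          exact absurd ⟨q.2, ⟨q, ⟨hq, hlt⟩, rfl⟩⟩ hG'
      exact lt_irrefl y (hy y (Or.inr hyMid))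
    · -- L empty, G nonempty : use u2 to get something below
      obtain ⟨x, y, z, hx, _, _⟩ := u2 (G ∪ Mid) (hG'.mono Set.subset_union_left)
        (lt_of_le_of_lt (mk_union_le _ _) (add_lt_of_lt hκ hGcard hMidcard))
      have hxMid : x ∈ Mid := by
        constructor
        · intro q hq hlt
          exact absurd ⟨q.2, ⟨q, ⟨hq, hlt⟩, rfl⟩⟩ hL
        · intro q hq hlt
          exact hx q.2 (Or.inl ⟨q, ⟨hq, hlt⟩, rfl⟩)
      exact lt_irrefl x (hx x (Or.inr hxMid))
    · -- both empty : Mid is everything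
      have : Mid = Set.univ := by
        ext x
        simp only [Set.mem_univ, iff_true]
        constructor
        · intro q hq hlt
          exact absurd ⟨q.2, ⟨q, ⟨hq, hlt⟩, rfl⟩⟩ hL
        · intro q hq hlt
          exact absurd ⟨q.2, ⟨q, ⟨hq, hlt⟩, rfl⟩⟩ hG'
      rw [this, mk_univ, hP] at hMidcard
      exact lt_irrefl κ hMidcard
  have : ¬ Mid ⊆ Prod.snd '' S := by
    intro hsub
    exact key (lt_of_le_of_lt ((mk_le_mk_of_subset hsub).trans mk_image_le) hcard)
  obtain ⟨x, hxMid, hxS⟩ := Set.not_subset.mp this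
  exact ⟨x, hxS, hxMid.1, hxMid.2⟩

include hκ u2 in
lemma back_ex (S : Set (P × P)) (hne : S.Nonempty) (hcard : #S < κ) :
    ∃ z : P, z ∉ Prod.fst '' S ∧ ∀ q ∈ S, Incomp z q.1 := by
  set A : Set P := Prod.fst '' S with hA
  have hAne : A.Nonempty := hne.image _
  have hAcard : #A < κ := lt_of_le_of_lt mk_image_le hcard
  obtain ⟨x, y, z, hx, _, _⟩ := u2 A hAne hAcard
  have h1 : (1 : Cardinal) < κ := lt_of_lt_of_le one_lt_aleph0 hκ
  obtain ⟨x', y', z', _, _, hz'⟩ := u2 (insert x A) (Set.insert_nonempty _ _)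
    (lt_of_le_of_lt Cardinal.mk_insert_le (add_lt_of_lt hκ hAcard h1))
  refine ⟨z', ?_, fun q hq => hz' q.1 (Set.mem_insert_of_mem _ ⟨q, hq, rfl⟩)⟩
  intro hz'A
  have h1 : x < z' := hx z' hz'A
  exact (hz' x (Set.mem_insert _ _)).2 h1

include hκ hP u1 u2 in
lemma ext1_spec (S : Set (P × P)) (hG : Good S) (hcard : #S < κ) (r : P) :
    Good (ext1 S r) ∧ (∀ q ∈ ext1 S r, q ∈ S ∨ q.1 = r) ∧ (∃ q ∈ ext1 S r, q.1 = r) ∧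
      #(ext1 S r) ≤ #S + 1 := by
  unfold ext1
  by_cases h : r ∈ Prod.fst '' S
  · rw [if_pos h]
    obtain ⟨q, hq, hq1⟩ := h
    exact ⟨hG, fun q hq => Or.inl hq, ⟨q, hq, hq1⟩, le_self_add⟩
  · rw [if_neg h]
    have hex := forth_ex κ hκ hP u1 u2 S hG hcard r
    have hx : (forthC S r) ∉ Prod.snd '' S ∧ (∀ q ∈ S, q.1 < r → q.2 < forthC S r) ∧
        (∀ q ∈ S, r < q.1 → forthC S r < q.2) := by
      unfold forthC
      rw [dif_pos hex]
      exact hex.choose_spec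
    have hr : ∀ q ∈ S, q.1 ≠ r := fun q hq heq => h ⟨q, hq, heq⟩
    refine ⟨⟨?_, ?_, ?_⟩, ?_, ⟨(r, forthC S r), Set.mem_insert _ _, rfl⟩, Cardinal.mk_insert_le⟩
    · rintro q₁ (rfl | h₁) q₂ (rfl | h₂) heq
      · rfl
      · exact absurd heq.symm (hr q₂ h₂)
      · exact absurd heq (hr q₁ h₁)
      · exact hG.1 q₁ h₁ q₂ h₂ heq
    · rintro q₁ (rfl | h₁) q₂ (rfl | h₂) heq
      · rfl
      · exact absurd ⟨q₂, h₂, heq.symm⟩ hx.1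
      · exact absurd ⟨q₁, h₁, heq⟩ hx.1
      · exact hG.2.1 q₁ h₁ q₂ h₂ heq
    · rintro q₁ (rfl | h₁) q₂ (rfl | h₂) hlt
      · exact absurd hlt (lt_irrefl _)
      · exact hx.2.2 q₂ h₂ hlt
      · exact hx.2.1 q₁ h₁ hlt
      · exact hG.2.2 q₁ h₁ q₂ h₂ hlt
    · rintro q (rfl | hq)
      · exact Or.inr rfl
      · exact Or.inl hq

include hκ hP u1 u2 in
lemma ext2_spec (S : Set (P × P)) (hG : Good S) (hne : S.Nonempty) (hcard : #S < κ) (r : P) :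
    Good (ext2 S r) ∧ (∀ q ∈ ext2 S r, q ∈ S ∨ q.1 = r ∨ q.2 = r) ∧
      (∃ q ∈ ext2 S r, q.1 = r) ∧ (∃ q ∈ ext2 S r, q.2 = r) := by
  obtain ⟨hG₁, htag₁, hfst₁, hcard₁⟩ := ext1_spec κ hκ hP u1 u2 S hG hcard r
  have hcard₁' : #(ext1 S r) < κ :=
    lt_of_le_of_lt hcard₁ (add_lt_of_lt hκ hcard (lt_of_lt_of_le one_lt_aleph0 hκ))
  unfold ext2
  by_cases h : r ∈ Prod.snd '' (ext1 S r)
  · rw [if_pos h]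
    obtain ⟨q, hq, hq2⟩ := h
    exact ⟨hG₁, fun q hq => (htag₁ q hq).imp id Or.inl, hfst₁, ⟨q, hq, hq2⟩⟩
  · rw [if_neg h]
    have hne₁ : (ext1 S r).Nonempty := hne.mono (subset_ext1 S r)
    have hex := back_ex κ hκ u2 (ext1 S r) hne₁ hcard₁'
    have hz : (backC (ext1 S r)) ∉ Prod.fst '' (ext1 S r) ∧
        ∀ q ∈ ext1 S r, Incomp (backC (ext1 S r)) q.1 := by
      unfold backC
      rw [dif_pos hex]
      exact hex.choose_spec
    have hzr : ∀ q ∈ ext1 S r, q.1 ≠ backC (ext1 S r) := fun q hq heq => hz.1 ⟨q, hq, heq⟩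
    have hrr : ∀ q ∈ ext1 S r, q.2 ≠ r := fun q hq heq => h ⟨q, hq, heq⟩
    refine ⟨⟨?_, ?_, ?_⟩, ?_, ?_, ⟨(backC (ext1 S r), r), Set.mem_insert _ _, rfl⟩⟩
    · rintro q₁ (rfl | h₁) q₂ (rfl | h₂) heq
      · rfl
      · exact absurd heq.symm (hzr q₂ h₂)
      · exact absurd heq (hzr q₁ h₁)
      · exact hG₁.1 q₁ h₁ q₂ h₂ heq
    · rintro q₁ (rfl | h₁) q₂ (rfl | h₂) heq
      · rfl
      · exact absurd heq.symm (hrr q₂ h₂)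
      · exact absurd heq (hrr q₁ h₁)
      · exact hG₁.2.1 q₁ h₁ q₂ h₂ heq
    · rintro q₁ (rfl | h₁) q₂ (rfl | h₂) hlt
      · exact absurd hlt (lt_irrefl _)
      · exact absurd hlt (hz.2 q₂ h₂).1
      · exact absurd hlt (hz.2 q₁ h₁).2
      · exact hG₁.2.2 q₁ h₁ q₂ h₂ hlt
    · rintro q (rfl | hq)
      · exact Or.inr (Or.inr rfl)
      · exact (htag₁ q hq).imp id Or.inl
    · obtain ⟨q, hq, hq1⟩ := hfst₁
      exact ⟨q, Set.mem_insert_of_mem _ hq, hq1⟩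

end Exists

end Stmt8Aux

theorem stmt_8 {P : Type u} [PartialOrder P] (κ : Cardinal.{u})
    (hreg : κ.IsRegular) (hP : #P = κ)
    (u1 : ∀ L G : Set P, L.Nonempty → G.Nonempty → #L < κ → #G < κ →
      (∀ a ∈ L, ∀ b ∈ G, a < b) →
      ∃ x : P, (∀ a ∈ L, a < x) ∧ ∀ b ∈ G, x < b)
    (u2 : ∀ K : Set P, K.Nonempty → #K < κ →
      ∃ x y z : P, (∀ k ∈ K, x < k) ∧ (∀ k ∈ K, k < y) ∧ ∀ k ∈ K, Incomp z k) :
    ∃ F : P → P, Function.Bijective F ∧ (∀ p q : P, p < q → F p < F q) ∧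
      ¬ ∀ p q : P, F p < F q → p < q := by
  classical
  have hκ : ℵ₀ ≤ κ := hreg.aleph0_le
  have hone : (1 : Cardinal) < κ := lt_of_lt_of_le one_lt_aleph0 hκ
  haveI hPn : Nonempty P := Cardinal.mk_ne_zero_iff.1 (by rw [hP]; exact (aleph0_pos.trans_le hκ).ne')
  obtain ⟨p0⟩ := id hPn
  obtain ⟨x0, y0, z0', hx0, _, _⟩ := u2 {p0} (Set.singleton_nonempty _)
    (by rw [Cardinal.mk_singleton]; exact hone)
  have hx0p : x0 < p0 := hx0 p0 rfl
  obtain ⟨_, _, b0, _, _, hb0⟩ := u2 {p0, x0} (Set.insert_nonempty _ _)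
    (lt_of_le_of_lt Cardinal.mk_insert_le
      (by rw [Cardinal.mk_singleton]; exact add_lt_of_lt hκ hone hone))
  have hincomp : Incomp p0 b0 := ⟨(hb0 p0 (Or.inl rfl)).2, (hb0 p0 (Or.inl rfl)).1⟩
  have hne0 : p0 ≠ b0 := by
    intro h
    exact (hb0 x0 (Or.inr rfl)).2 (h ▸ hx0p)
  obtain ⟨e⟩ := Cardinal.eq.1 (show #(κ.ord.ToType) = #P by rw [Cardinal.mk_ord_toType, hP])
  set I : Set (P × P) := {(p0, x0), (b0, p0)} with hI
  have hIne : I.Nonempty := ⟨(p0, x0), Or.inl rfl⟩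
  have hGoodI : Stmt8Aux.Good I := by
    refine ⟨?_, ?_, ?_⟩
    · rintro q₁ (rfl | rfl) q₂ (rfl | rfl) heq
      · rfl
      · exact absurd heq hne0
      · exact absurd heq.symm hne0
      · rfl
    · rintro q₁ (rfl | rfl) q₂ (rfl | rfl) heq
      · rfl
      · exact absurd heq (ne_of_lt hx0p)
      · exact absurd heq.symm (ne_of_lt hx0p)
      · rfl
    · rintro q₁ (rfl | rfl) q₂ (rfl | rfl) hlt
      · exact absurd hlt (lt_irrefl _)
      · exact absurd hlt hincomp.1
      · exact absurd hlt hincomp.2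
      · exact absurd hlt (lt_irrefl _)
  have main : ∀ i : κ.ord.ToType, Stmt8Aux.Good (Stmt8Aux.T κ e I i) ∧
      (∀ q ∈ Stmt8Aux.T κ e I i, q ∈ I ∨ (∃ j ≤ i, q.1 = e j) ∨ (∃ j ≤ i, q.2 = e j)) ∧
      (∃ q ∈ Stmt8Aux.T κ e I i, q.1 = e i) ∧ (∃ q ∈ Stmt8Aux.T κ e I i, q.2 = e i) := by
    intro i
    refine wellFounded_lt.induction
      (C := fun i => Stmt8Aux.Good (Stmt8Aux.T κ e I i) ∧
        (∀ q ∈ Stmt8Aux.T κ e I i, q ∈ I ∨ (∃ j ≤ i, q.1 = e j) ∨ (∃ j ≤ i, q.2 = e j)) ∧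
        (∃ q ∈ Stmt8Aux.T κ e I i, q.1 = e i) ∧ (∃ q ∈ Stmt8Aux.T κ e I i, q.2 = e i))
      i fun i IH => ?_
    set U : Set (P × P) := I ∪ ⋃ j, ⋃ _ : j < i, Stmt8Aux.T κ e I j with hU
    have hTeq : Stmt8Aux.T κ e I i = Stmt8Aux.ext2 U (e i) := Stmt8Aux.T_eq κ e I i
    have hcover : ∀ q ∈ U, q ∈ I ∨ ∃ j, j < i ∧ q ∈ Stmt8Aux.T κ e I j := by
      intro q hq
      rcases hq with hq | hq
      · exact Or.inl hq
      · obtain ⟨j, hj, hq⟩ := Set.mem_iUnion₂.1 hq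
        exact Or.inr ⟨j, hj, hq⟩
    have hIT : ∀ j, I ⊆ Stmt8Aux.T κ e I j := fun j => Stmt8Aux.subset_T κ e I j
    have hcommon : ∀ q₁ ∈ U, ∀ q₂ ∈ U, ∃ S, Stmt8Aux.Good S ∧ q₁ ∈ S ∧ q₂ ∈ S := by
      intro q₁ h₁ q₂ h₂
      rcases hcover q₁ h₁ with h₁ | ⟨j₁, hj₁, h₁⟩ <;> rcases hcover q₂ h₂ with h₂ | ⟨j₂, hj₂, h₂⟩
      · exact ⟨I, hGoodI, h₁, h₂⟩
      · exact ⟨_, (IH j₂ hj₂).1, hIT j₂ h₁, h₂⟩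
      · exact ⟨_, (IH j₁ hj₁).1, h₁, hIT j₁ h₂⟩
      · exact ⟨_, (IH _ (max_lt hj₁ hj₂)).1,
          Stmt8Aux.T_mono κ e I (le_max_left _ _) h₁,
          Stmt8Aux.T_mono κ e I (le_max_right _ _) h₂⟩
    have hGoodU : Stmt8Aux.Good U := by
      refine ⟨?_, ?_, ?_⟩ <;> intro q₁ h₁ q₂ h₂ h <;>
        obtain ⟨S, gS, m₁, m₂⟩ := hcommon q₁ h₁ q₂ h₂
      · exact gS.1 q₁ m₁ q₂ m₂ h
      · exact gS.2.1 q₁ m₁ q₂ m₂ h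
      · exact gS.2.2 q₁ m₁ q₂ m₂ h
    have hDcard : #({q ∈ U | ∃ k, k < i ∧ q.1 = e k}) ≤ #(Set.Iio i) := by
      refine Cardinal.mk_le_of_injective (f := fun q =>
        (⟨e.symm q.1.1, by
          obtain ⟨k, hk, hqk⟩ := q.2.2
          rw [hqk, Equiv.symm_apply_apply]
          exact hk⟩ : Set.Iio i)) ?_
      intro a b hab
      have h1 : a.1.1 = b.1.1 := e.symm.injective (congrArg Subtype.val hab)
      have h2 : a.1.2 = b.1.2 := hGoodU.1 a.1 a.2.1 b.1 b.2.1 h1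
      exact Subtype.ext (Prod.ext h1 h2)
    have hRcard : #({q ∈ U | ∃ k, k < i ∧ q.2 = e k}) ≤ #(Set.Iio i) := by
      refine Cardinal.mk_le_of_injective (f := fun q =>
        (⟨e.symm q.1.2, by
          obtain ⟨k, hk, hqk⟩ := q.2.2
          rw [hqk, Equiv.symm_apply_apply]
          exact hk⟩ : Set.Iio i)) ?_
      intro a b hab
      have h2 : a.1.2 = b.1.2 := e.symm.injective (congrArg Subtype.val hab)
      have h1 : a.1.1 = b.1.1 := hGoodU.2.1 a.1 a.2.1 b.1 b.2.1 h2
      exact Subtype.ext (Prod.ext h1 h2)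
    have hUsub : U ⊆ I ∪ ({q ∈ U | ∃ k, k < i ∧ q.1 = e k} ∪
        {q ∈ U | ∃ k, k < i ∧ q.2 = e k}) := by
      intro q hq
      rcases hcover q hq with h | ⟨j, hj, hqT⟩
      · exact Or.inl h
      · rcases (IH j hj).2.1 q hqT with h | ⟨k, hk, hqk⟩ | ⟨k, hk, hqk⟩
        · exact Or.inl h
        · exact Or.inr (Or.inl ⟨hq, k, lt_of_le_of_lt hk hj, hqk⟩)
        · exact Or.inr (Or.inr ⟨hq, k, lt_of_le_of_lt hk hj, hqk⟩)
    have hIcard : #I < κ :=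
      lt_of_lt_of_le ((Set.Finite.insert _ (Set.finite_singleton _)).lt_aleph0) hκ
    have hIio : #(Set.Iio i) < κ := Cardinal.mk_Iio_ord_toType i
    have hUcard : #U < κ :=
      lt_of_le_of_lt (mk_le_mk_of_subset hUsub)
        (lt_of_le_of_lt (mk_union_le _ _) (add_lt_of_lt hκ hIcard
          (lt_of_le_of_lt (mk_union_le _ _)
            (add_lt_of_lt hκ (hDcard.trans_lt hIio) (hRcard.trans_lt hIio)))))
    have hUne : U.Nonempty := hIne.mono Set.subset_union_left
    obtain ⟨hg, htag, hf, hs⟩ := Stmt8Aux.ext2_spec κ hκ hP u1 u2 U hGoodU hUne hUcard (e i)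
    rw [← hTeq] at hg htag hf hs
    refine ⟨hg, ?_, hf, hs⟩
    intro q hq
    rcases htag q hq with h | h | h
    · rcases hcover q h with h | ⟨j, hj, hqT⟩
      · exact Or.inl h
      · rcases (IH j hj).2.1 q hqT with h | ⟨k, hk, hqk⟩ | ⟨k, hk, hqk⟩
        · exact Or.inl h
        · exact Or.inr (Or.inl ⟨k, le_of_lt (lt_of_le_of_lt hk hj), hqk⟩)
        · exact Or.inr (Or.inr ⟨k, le_of_lt (lt_of_le_of_lt hk hj), hqk⟩)
    · exact Or.inr (Or.inl ⟨i, le_refl i, h⟩)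
    · exact Or.inr (Or.inr ⟨i, le_refl i, h⟩)
  have hFex : ∀ p : P, ∃ x : P, (p, x) ∈ Stmt8Aux.T κ e I (e.symm p) := by
    intro p
    obtain ⟨⟨q1, q2⟩, hq, hq1⟩ := (main (e.symm p)).2.2.1
    rw [Equiv.apply_symm_apply] at hq1
    dsimp only at hq1
    subst hq1
    exact ⟨q2, hq⟩
  choose F hFspec using hFex
  have huniq : ∀ (i : κ.ord.ToType) (p x : P), (p, x) ∈ Stmt8Aux.T κ e I i → F p = x := by
    intro i p x hx
    have h1 : (p, F p) ∈ Stmt8Aux.T κ e I (max i (e.symm p)) :=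
      Stmt8Aux.T_mono κ e I (le_max_right _ _) (hFspec p)
    have h2 : (p, x) ∈ Stmt8Aux.T κ e I (max i (e.symm p)) :=
      Stmt8Aux.T_mono κ e I (le_max_left _ _) hx
    exact (main _).1.1 (p, F p) h1 (p, x) h2 rfl
  have hFp0 : F p0 = x0 := huniq (e.symm p0) p0 x0 (Stmt8Aux.subset_T κ e I _ (Or.inl rfl))
  have hFb0 : F b0 = p0 := huniq (e.symm b0) b0 p0 (Stmt8Aux.subset_T κ e I _ (Or.inr rfl))
  refine ⟨F, ⟨?_, ?_⟩, ?_, ?_⟩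
  · intro p q h
    have h1 : (p, F p) ∈ Stmt8Aux.T κ e I (max (e.symm p) (e.symm q)) :=
      Stmt8Aux.T_mono κ e I (le_max_left _ _) (hFspec p)
    have h2 : (q, F q) ∈ Stmt8Aux.T κ e I (max (e.symm p) (e.symm q)) :=
      Stmt8Aux.T_mono κ e I (le_max_right _ _) (hFspec q)
    exact (main _).1.2.1 (p, F p) h1 (q, F q) h2 h
  · intro x
    obtain ⟨⟨q1, q2⟩, hq, hq2⟩ := (main (e.symm x)).2.2.2
    rw [Equiv.apply_symm_apply] at hq2
    dsimp only at hq2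
    subst hq2
    exact ⟨q1, huniq _ q1 q2 hq⟩
  · intro p q h
    have h1 : (p, F p) ∈ Stmt8Aux.T κ e I (max (e.symm p) (e.symm q)) :=
      Stmt8Aux.T_mono κ e I (le_max_left _ _) (hFspec p)
    have h2 : (q, F q) ∈ Stmt8Aux.T κ e I (max (e.symm p) (e.symm q)) :=
      Stmt8Aux.T_mono κ e I (le_max_right _ _) (hFspec q)
    exact (main _).1.2.2 (p, F p) h1 (q, F q) h2 h
  · intro H
    exact hincomp.1 (H p0 b0 (by rw [hFp0, hFb0]; exact hx0p))
end

section
/- Let X and Y be relational structures. If there exists a back-and-forth system Π of partial condensations from X to Y, then every R-positive infinitary sentence true in X is true in Y (X ≦_{P∞ω} Y). -/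
open Cardinal

universe u v

variable {L : RelLang}

/-- Infinitary `L_{∞ω}`-formulas over the relational language `L`, with
variables indexed by `ℕ`, set-indexed conjunctions and disjunctions,
negation, and finite quantification. -/
inductive InfForm (L : RelLang) : Type 1
  | eq : ℕ → ℕ → InfForm L
  | rel : (i : L.I) → (Fin (L.arity i) → ℕ) → InfForm L
  | not : InfForm L → InfForm L
  | iAnd : (ι : Type) → (ι → InfForm L) → InfForm L
  | iOr : (ι : Type) → (ι → InfForm L) → InfForm L
  | all : ℕ → InfForm L → InfForm L
  | ex : ℕ → InfForm L → InfForm L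

/-- Satisfaction of an infinitary formula in `A` under the valuation `v`. -/
def InfForm.Sat {X : Type u} (A : RelStr L X) : (ℕ → X) → InfForm L → Prop
  | v, .eq a b => v a = v b
  | v, .rel i t => (fun k => v (t k)) ∈ A.rel i
  | v, .not φ => ¬ InfForm.Sat A v φ
  | v, .iAnd _ f => ∀ j, InfForm.Sat A v (f j)
  | v, .iOr _ f => ∃ j, InfForm.Sat A v (f j)
  | v, .all m φ => ∀ a : X, InfForm.Sat A (Function.update v m a) φ
  | v, .ex m φ => ∃ a : X, InfForm.Sat A (Function.update v m a) φ

/-- The free variables of an infinitary formula. -/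
def InfForm.fv : InfForm L → Set ℕ
  | .eq a b => {a, b}
  | .rel _ t => Set.range t
  | .not φ => φ.fv
  | .iAnd _ f => ⋃ j, (f j).fv
  | .iOr _ f => ⋃ j, (f j).fv
  | .all m φ => φ.fv \ {m}
  | .ex m φ => φ.fv \ {m}

/-- A sentence: an infinitary formula without free variables. -/
def InfForm.IsSentence (φ : InfForm L) : Prop := φ.fv = ∅

/-- The `R`-positive infinitary formulas: built from atomic formulas and
negated equalities (no negated relation symbols) by arbitrary conjunctions
and disjunctions and finite quantification. -/
inductive InfForm.Pos : InfForm L → Prop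
  | eq (a b : ℕ) : InfForm.Pos (.eq a b)
  | neq (a b : ℕ) : InfForm.Pos (.not (.eq a b))
  | rel (i : L.I) (t : Fin (L.arity i) → ℕ) : InfForm.Pos (.rel i t)
  | iAnd (ι : Type) (f : ι → InfForm L) :
      (∀ j, InfForm.Pos (f j)) → InfForm.Pos (.iAnd ι f)
  | iOr (ι : Type) (f : ι → InfForm L) :
      (∀ j, InfForm.Pos (f j)) → InfForm.Pos (.iOr ι f)
  | all (m : ℕ) (φ : InfForm L) : InfForm.Pos φ → InfForm.Pos (.all m φ)
  | ex (m : ℕ) (φ : InfForm L) : InfForm.Pos φ → InfForm.Pos (.ex m φ)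

/-- The `R`-negative infinitary formulas: built from negated atomic relational
formulas, equalities and negated equalities, by arbitrary conjunctions and
disjunctions and finite quantification. -/
inductive InfForm.Neg : InfForm L → Prop
  | eq (a b : ℕ) : InfForm.Neg (.eq a b)
  | neq (a b : ℕ) : InfForm.Neg (.not (.eq a b))
  | nrel (i : L.I) (t : Fin (L.arity i) → ℕ) : InfForm.Neg (.not (.rel i t))
  | iAnd (ι : Type) (f : ι → InfForm L) :
      (∀ j, InfForm.Neg (f j)) → InfForm.Neg (.iAnd ι f)
  | iOr (ι : Type) (f : ι → InfForm L) :
      (∀ j, InfForm.Neg (f j)) → InfForm.Neg (.iOr ι f)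
  | all (m : ℕ) (φ : InfForm L) : InfForm.Neg φ → InfForm.Neg (.all m φ)
  | ex (m : ℕ) (φ : InfForm L) : InfForm.Neg φ → InfForm.Neg (.ex m φ)

theorem stmt_12 {X : Type u} {Y : Type v} (A : RelStr L X) (B : RelStr L Y)
    (S : Set (Set (X × Y))) (hbfs : IsBFS A B S) :
    ∀ φ : InfForm L, φ.Pos → φ.IsSentence →
      (∀ v : ℕ → X, InfForm.Sat A v φ) → ∀ w : ℕ → Y, InfForm.Sat B w φ := by
  obtain ⟨hne, hpc, hfwd, hbwd⟩ := hbfs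
  have key : ∀ φ : InfForm L, φ.Pos → ∀ f ∈ S, ∀ v : ℕ → X, ∀ w : ℕ → Y,
      (∀ n ∈ φ.fv, (v n, w n) ∈ f) → InfForm.Sat A v φ → InfForm.Sat B w φ := by
    intro φ hp
    induction hp with
    | eq a b =>
      intro f hf v w hvw hsat
      exact (hpc f hf).1 (v a, w a) (hvw a (by simp [InfForm.fv]))
        (v b, w b) (hvw b (by simp [InfForm.fv])) hsat
    | neq a b =>
      intro f hf v w hvw hsat heq
      exact hsat ((hpc f hf).2.1 (v a, w a) (hvw a (by simp [InfForm.fv, InfForm.not]))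
        (v b, w b) (hvw b (by simp [InfForm.fv, InfForm.not])) heq)
    | rel i t =>
      intro f hf v w hvw hsat
      exact (hpc f hf).2.2 i (fun k => v (t k)) (fun k => w (t k))
        (fun k => hvw (t k) ⟨k, rfl⟩) hsat
    | iAnd ι g hg ih =>
      intro f hf v w hvw hsat j
      exact ih j f hf v w (fun n hn => hvw n (Set.mem_iUnion.2 ⟨j, hn⟩)) (hsat j)
    | iOr ι g hg ih =>
      intro f hf v w hvw hsat
      obtain ⟨j, hj⟩ := hsat
      exact ⟨j, ih j f hf v w (fun n hn => hvw n (Set.mem_iUnion.2 ⟨j, hn⟩)) hj⟩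
    | all m ψ hψ ih =>
      intro f hf v w hvw hsat b
      obtain ⟨g, hg, hfg, a, hab⟩ := hbwd f hf b
      refine ih g hg (Function.update v m a) (Function.update w m b) ?_ (hsat a)
      intro n hn
      by_cases hnm : n = m
      · subst hnm; simpa using hab
      · simp only [Function.update_of_ne hnm]
        exact hfg (hvw n ⟨hn, hnm⟩)
    | ex m ψ hψ ih =>
      intro f hf v w hvw hsat
      obtain ⟨a, ha⟩ := hsat
      obtain ⟨g, hg, hfg, b, hab⟩ := hfwd f hf a
      refine ⟨b, ih g hg (Function.update v m a) (Function.update w m b) ?_ ha⟩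
      intro n hn
      by_cases hnm : n = m
      · subst hnm; simpa using hab
      · simp only [Function.update_of_ne hnm]
        exact hfg (hvw n ⟨hn, hnm⟩)
  intro φ hp hsent hsat w
  obtain ⟨f, hf⟩ := hne
  obtain ⟨g, hg, _, x, hxg⟩ := hbwd f hf (w 0)
  refine key φ hp g hg (fun _ => x) w ?_ (hsat _)
  intro n hn
  rw [hsent] at hn
  exact absurd hn (Set.notMem_empty n)
end

section
/- Let X = ⟨X, ρ⟩ and Y = ⟨Y, σ⟩ be countable equivalence-relation structures in the class C (each has infinitely many singleton classes and classes of arbitrarily large finite size). Then X condenses onto Y (there is a bijective homomorphism X → Y) if and only if either all equivalence classes of X are finite, or Y has an infinite equivalence class. -/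
/-- Membership in the class `C`: a countably infinite set with an equivalence
relation having infinitely many singleton classes and, for each `n`, a class
with at least `n` elements. -/
def InClassC {X : Type} (ρ : X → X → Prop) : Prop :=
  Countable X ∧ Infinite X ∧ Equivalence ρ ∧
  {x : X | ∀ y, ρ x y → y = x}.Infinite ∧
  ∀ n : ℕ, ∃ x : X, ∃ s : Finset X, n ≤ s.card ∧ ∀ y ∈ s, ρ x y

/-- `X` condenses onto `Y`: there is a bijective homomorphism. -/
def Condenses {X Y : Type} (ρ : X → X → Prop) (σ : Y → Y → Prop) : Prop :=
  ∃ f : X → Y, Function.Bijective f ∧ ∀ a b : X, ρ a b → σ (f a) (f b)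

/-- All equivalence classes are finite. -/
def AllClassesFinite {X : Type} (ρ : X → X → Prop) : Prop :=
  ∀ x : X, {y : X | ρ x y}.Finite

open Set Function

/-- helper: inject a small finite set into a big finite set. -/
private lemma exists_injOn_mapsTo {X Y : Type} [Nonempty Y] {s : Set X} {t : Set Y}
    (hs : s.Finite) (ht : t.Finite) (h : s.ncard ≤ t.ncard) :
    ∃ f : X → Y, Set.InjOn f s ∧ Set.MapsTo f s t := by
  classical
  haveI := hs.fintype
  haveI := ht.fintype
  have hc : Fintype.card s ≤ Fintype.card t := by
    rwa [← Nat.card_eq_fintype_card, ← Nat.card_eq_fintype_card,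
      Nat.card_coe_set_eq, Nat.card_coe_set_eq]
  obtain ⟨e⟩ := Function.Embedding.nonempty_of_card_le hc
  refine ⟨fun x => if hx : x ∈ s then (e ⟨x, hx⟩ : Y) else Classical.arbitrary Y, ?_, ?_⟩
  · intro a ha b hb hab
    simp only [dif_pos ha, dif_pos hb] at hab
    have := e.injective (Subtype.coe_injective hab)
    simpa using congrArg Subtype.val this
  · intro a ha
    simp only [dif_pos ha]
    exact (e ⟨a, ha⟩).2

/-- helper: assemble a condensation from an injection on the non-singleton part. -/
private lemma condenses_of_g {X Y : Type} {ρ : X → X → Prop} {σ : Y → Y → Prop}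
    (hX : InClassC ρ) (hY : InClassC σ) (g : X → Y)
    (hinj : Set.InjOn g {x | ¬ ∀ y, ρ x y → y = x})
    (hhom : ∀ a b, ρ a b → a ≠ b → σ (g a) (g b))
    (hR : ((Set.univ : Set Y) \ g '' {x | ¬ ∀ y, ρ x y → y = x}).Infinite) :
    Condenses ρ σ := by
  haveI : Countable X := hX.1
  haveI : Infinite X := hX.2.1
  haveI : Countable Y := hY.1
  haveI : Infinite Y := hY.2.1
  set N : Set X := {x | ¬ ∀ y, ρ x y → y = x} with hN
  set S : Set X := {x | ∀ y, ρ x y → y = x} with hS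
  set R : Set Y := (Set.univ : Set Y) \ g '' N with hRdef
  have hSinf : S.Infinite := hX.2.2.2.1
  haveI : Infinite ↥S := hSinf.to_subtype
  haveI : Infinite ↥R := hR.to_subtype
  obtain ⟨dS⟩ := nonempty_denumerable ↥S
  obtain ⟨dR⟩ := nonempty_denumerable ↥R
  haveI := dS
  haveI := dR
  let e : ↥S ≃ ↥R := (Denumerable.eqv ↥S).trans (Denumerable.eqv ↥R).symm
  classical
  refine ⟨fun x => if h : x ∈ S then (e ⟨x, h⟩ : Y) else g x, ⟨?_, ?_⟩, ?_⟩
  · -- injective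
    intro a b hab
    by_cases ha : a ∈ S <;> by_cases hb : b ∈ S
    · simp only [dif_pos ha, dif_pos hb] at hab
      have := e.injective (Subtype.coe_injective hab)
      simpa using congrArg Subtype.val this
    · simp only [dif_pos ha, dif_neg hb] at hab
      exact absurd (hab ▸ (e ⟨a, ha⟩).2.2) (not_not_intro ⟨b, hb, rfl⟩)
    · simp only [dif_neg ha, dif_pos hb] at hab
      exact absurd (hab.symm ▸ (e ⟨b, hb⟩).2.2) (not_not_intro ⟨a, ha, rfl⟩)
    · simp only [dif_neg ha, dif_neg hb] at hab
      exact hinj ha hb hab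
  · -- surjective
    intro y
    by_cases hy : y ∈ g '' N
    · obtain ⟨x, hxN, rfl⟩ := hy
      exact ⟨x, dif_neg hxN⟩
    · have hyR : y ∈ R := ⟨trivial, hy⟩
      refine ⟨(e.symm ⟨y, hyR⟩ : ↥S), ?_⟩
      simp only [dif_pos (e.symm ⟨y, hyR⟩).2, Subtype.coe_eta, Equiv.apply_symm_apply]
  · -- homomorphism
    intro a b hab
    by_cases ha : a ∈ S
    · have : b = a := ha b hab
      subst this
      exact hY.2.2.1.refl _
    · by_cases hba : a = b
      · subst hba; exact hY.2.2.1.refl _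
      · have hb : b ∉ S := by
          intro hb
          exact hba (hb a (hX.2.2.1.symm hab))
        simp only [dif_neg ha, dif_neg hb]
        exact hhom a b hab hba

/-- helper: if `Y` has an infinite class, everything condenses onto it. -/
private lemma condenses_of_infinite_class {X Y : Type} {ρ : X → X → Prop} {σ : Y → Y → Prop}
    (hX : InClassC ρ) (hY : InClassC σ) (y₀ : Y) (hy₀ : {y' : Y | σ y₀ y'}.Infinite) :
    Condenses ρ σ := by
  haveI : Countable X := hX.1
  haveI : Countable Y := hY.1
  set S : Set Y := {y' | σ y₀ y'} with hSdef
  haveI : Infinite ↥S := hy₀.to_subtype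
  obtain ⟨dS⟩ := nonempty_denumerable ↥S
  haveI := dS
  obtain ⟨ι, hι⟩ := Countable.exists_injective_nat X
  let g : X → Y := fun x => ((Denumerable.eqv ↥S).symm (ι x) : Y)
  have hgS : ∀ x, g x ∈ S := fun x => ((Denumerable.eqv ↥S).symm (ι x)).2
  have hginj : Function.Injective g := fun a b hab =>
    hι ((Denumerable.eqv ↥S).symm.injective (Subtype.coe_injective hab))
  apply condenses_of_g hX hY g (hginj.injOn)
  · intro a b _ _
    exact hY.2.2.1.trans (hY.2.2.1.symm (hgS a)) (hgS b)
  · have hsub : {y : Y | ∀ y', σ y y' → y' = y} ⊆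
        (Set.univ : Set Y) \ g '' {x | ¬ ∀ y, ρ x y → y = x} := by
      intro y hy
      refine ⟨trivial, ?_⟩
      rintro ⟨x, -, rfl⟩
      have hgx : g x ∈ S := hgS x
      have h2 : (S \ {g x}).Infinite := hy₀.diff (Set.finite_singleton _)
      obtain ⟨z, hzS, hzne⟩ := h2.nonempty
      have : σ (g x) z := hY.2.2.1.trans (hY.2.2.1.symm hgx) hzS
      exact hzne (hy z this)
    exact (hY.2.2.2.1).mono hsub

theorem stmt_18 {X Y : Type} (ρ : X → X → Prop) (σ : Y → Y → Prop)
    (hX : InClassC ρ) (hY : InClassC σ) :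
    Condenses ρ σ ↔ (AllClassesFinite ρ ∨ ∃ y : Y, {y' : Y | σ y y'}.Infinite) := by
  constructor
  · rintro ⟨f, ⟨finj, fsurj⟩, fhom⟩
    by_contra hcon
    push_neg at hcon
    obtain ⟨h1, h2⟩ := hcon
    rw [AllClassesFinite] at h1
    push_neg at h1
    obtain ⟨x₀, hx₀⟩ := h1
    have hinf : {y : X | ρ x₀ y}.Infinite := hx₀
    have hfin : {y' : Y | σ (f x₀) y'}.Finite := h2 (f x₀)
    have hsub : f '' {y : X | ρ x₀ y} ⊆ {y' : Y | σ (f x₀) y'} := by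
      rintro _ ⟨y, hy, rfl⟩
      exact fhom _ _ hy
    exact (hinf.image finj.injOn) (hfin.subset hsub)
  · rintro (hfinX | ⟨y₀, hy₀⟩)
    swap
    · exact condenses_of_infinite_class hX hY y₀ hy₀
    by_cases hYinf : ∃ y : Y, {y' : Y | σ y y'}.Infinite
    · obtain ⟨y₀, hy₀⟩ := hYinf
      exact condenses_of_infinite_class hX hY y₀ hy₀
    push_neg at hYinf
    have hfinY : AllClassesFinite σ := fun y => hYinf y
    -- the case where all classes on both sides are finite
    haveI : Countable X := hX.1
    haveI : Infinite Y := hY.2.1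
    have EX : Equivalence ρ := hX.2.2.1
    have EY : Equivalence σ := hY.2.2.1
    set clX : X → Set X := fun x => {y | ρ x y} with hclX
    set clY : Y → Set Y := fun y => {y' | σ y y'} with hclYdef
    have hclX_eq : ∀ {a b : X}, ρ a b → clX a = clX b := by
      intro a b hab
      ext y
      exact ⟨fun h => EX.trans (EX.symm hab) h, fun h => EX.trans hab h⟩
    have hclY_eq : ∀ {u v : Y}, σ u v → clY u = clY v := by
      intro u v huv
      ext y
      exact ⟨fun h => EY.trans (EY.symm huv) h, fun h => EY.trans huv h⟩
    let sX : Setoid X := ⟨ρ, EX⟩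
    obtain ⟨idx, hidx⟩ := Countable.exists_injective_nat (Quotient sX)
    set code : X → ℕ := fun x => Nat.pair (idx (Quotient.mk sX x)) ((clX x).ncard) with hcode
    have hcode_eq : ∀ {a b : X}, ρ a b → code a = code b := by
      intro a b hab
      simp only [hcode]
      rw [Quotient.sound (hab : sX.r a b), hclX_eq hab]
    have hcode_ne : ∀ {a b : X}, ¬ ρ a b → code a ≠ code b := by
      intro a b hab hc
      apply hab
      have h1 : idx (Quotient.mk sX a) = idx (Quotient.mk sX b) := (Nat.pair_eq_pair.mp hc).1
      exact Quotient.exact (hidx h1)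
    -- the set of attained class sizes in Y
    set p : ℕ → Prop := fun n => ∃ y : Y, (clY y).ncard = n with hp
    have hTinf : (setOf p).Infinite := by
      apply Set.infinite_of_not_bddAbove
      rintro ⟨B, hB⟩
      obtain ⟨x, s, hcard, hmem⟩ := hY.2.2.2.2 (B + 1)
      have hsub : (s : Set Y) ⊆ clY x := fun y hy => hmem y hy
      have h1 : B + 1 ≤ (clY x).ncard := by
        calc B + 1 ≤ s.card := hcard
        _ = (s : Set Y).ncard := (Set.ncard_coe_finset s).symm
        _ ≤ (clY x).ncard := Set.ncard_le_ncard hsub (hfinY x)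
      have h2 : (clY x).ncard ≤ B := hB ⟨x, rfl⟩
      omega
    set t : X → ℕ := fun x => Nat.nth p (code x) with ht
    set pick : ℕ → Y := fun n => Classical.epsilon (fun y => (clY y).ncard = n) with hpickdef
    have hpick : ∀ n, p n → (clY (pick n)).ncard = n := fun n h => Classical.epsilon_spec h
    set D : X → Set Y := fun x => clY (pick (t x)) with hD
    have hDcard : ∀ x, (D x).ncard = t x := fun x =>
      hpick _ (Nat.nth_mem_of_infinite hTinf _)
    have ht_ge : ∀ x, code x ≤ t x := fun x => (Nat.nth_strictMono hTinf).le_apply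
    have hκ_le : ∀ x, (clX x).ncard ≤ (D x).ncard := by
      intro x
      rw [hDcard]
      exact le_trans (Nat.right_le_pair _ _) (ht_ge x)
    have hD_eq : ∀ {a b : X}, ρ a b → D a = D b := by
      intro a b hab
      simp only [hD, ht, hcode_eq hab]
    -- per-class embeddings
    have hemb : ∀ r : X, ∃ φ : X → Y, Set.InjOn φ (clX r) ∧ Set.MapsTo φ (clX r) (D r) :=
      fun r => exists_injOn_mapsTo (hfinX r) (hfinY _) (hκ_le r)
    choose Φ hΦinj hΦmaps using hemb
    set rep : X → X := fun x => (Quotient.mk sX x).out with hrepdef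
    have hrep : ∀ x, ρ (rep x) x := fun x => Quotient.mk_out (s := sX) x
    have hrep_eq : ∀ {a b : X}, ρ a b → rep a = rep b := fun hab =>
      congrArg Quotient.out (Quotient.sound hab)
    set g : X → Y := fun x => Φ (rep x) x with hg
    have hmemcl : ∀ x, x ∈ clX (rep x) := fun x => hrep x
    have hgD : ∀ x, g x ∈ D x := by
      intro x
      have h1 : g x ∈ D (rep x) := hΦmaps (rep x) (hmemcl x)
      rwa [hD_eq (hrep x)] at h1
    have hginj : Function.Injective g := by
      intro a b hab
      by_cases hr : ρ a b
      · have he : rep a = rep b := hrep_eq hr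
        have hb' : b ∈ clX (rep a) := he ▸ hmemcl b
        have hab' : Φ (rep a) a = Φ (rep b) b := hab
        rw [← he] at hab'
        exact hΦinj (rep a) (hmemcl a) hb' hab'
      · exfalso
        have hga : g a ∈ D a := hgD a
        have hgb : g a ∈ D b := hab ▸ hgD b
        have hDab : D a = D b := by
          have h1 : σ (pick (t a)) (g a) := hga
          have h2 : σ (pick (t b)) (g a) := hgb
          exact hclY_eq (EY.trans h1 (EY.symm h2))
        have : t a = t b := by
          rw [← hDcard a, ← hDcard b, hDab]
        have : code a = code b :=
          (Nat.nth_strictMono hTinf).injective this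
        exact hcode_ne hr this
    -- singleton classes of Y avoid the range of g on nonsingletons
    apply condenses_of_g hX hY g hginj.injOn
    · intro a b hab _
      have h1 : σ (pick (t a)) (g a) := hgD a
      have h2 : σ (pick (t a)) (g b) := by
        have := hgD b
        rwa [← hD_eq hab] at this
      exact EY.trans (EY.symm h1) h2
    · have hsub : {y : Y | ∀ y', σ y y' → y' = y} ⊆
          (Set.univ : Set Y) \ g '' {x | ¬ ∀ y, ρ x y → y = x} := by
        intro y hy
        refine ⟨trivial, ?_⟩
        rintro ⟨x, hxN, rfl⟩
        -- y = g x is in a singleton class, but D x has at least 2 elements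
        have h2le : 2 ≤ (clX x).ncard := by
          simp only [Set.mem_setOf_eq] at hxN
          push_neg at hxN
          obtain ⟨z, hz, hzne⟩ := hxN
          have hpair : ({x, z} : Set X) ⊆ clX x := by
            intro w hw
            simp only [Set.mem_insert_iff, Set.mem_singleton_iff] at hw
            rcases hw with rfl | rfl
            · exact EX.refl w
            · exact hz
          calc 2 = ({x, z} : Set X).ncard := (Set.ncard_pair (Ne.symm hzne)).symm
          _ ≤ (clX x).ncard := Set.ncard_le_ncard hpair (hfinX x)
        have hDsing : D x = clY (g x) := hclY_eq (hgD x)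
        have hclgx : clY (g x) = {g x} := by
          ext w
          simp only [Set.mem_singleton_iff]
          exact ⟨fun h => hy w h, fun h => h ▸ EY.refl _⟩
        have hone : (D x).ncard = 1 := by
          rw [hDsing, hclgx, Set.ncard_singleton]
        have := hκ_le x
        omega
      exact (hY.2.2.2.1).mono hsub
end

section
/- Let X and Y be countable equivalence-relation structures in the class C. Then X and Y are bi-condensable (each condenses onto the other) if and only if either both have all classes finite or both have some infinite class. In particular, C is partitioned into exactly two bi-condensability classes. -/
open Classical

section FinCase

variable (ρ σ : ℕ → ℕ → Prop)

/-- A good finite partial condensation: a finite graph that is a bijection between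
its domain and range, whose domain is a union of ρ-classes, range a union of
σ-classes, and which respects the relations. -/
def Good (G : Finset (ℕ × ℕ)) : Prop :=
  (∀ p ∈ G, ∀ q ∈ G, (p.1 = q.1 ↔ p.2 = q.2)) ∧
  (∀ p ∈ G, ∀ x, ρ p.1 x → ∃ q ∈ G, q.1 = x) ∧
  (∀ p ∈ G, ∀ y, σ p.2 y → ∃ q ∈ G, q.2 = y) ∧
  (∀ p ∈ G, ∀ q ∈ G, ρ p.1 q.1 → σ p.2 q.2)

lemma good_empty : Good ρ σ ∅ := by simp [Good]

variable {ρ σ}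

lemma addBlock (hρ : Equivalence ρ) {G : Finset (ℕ × ℕ)} (hG : Good ρ σ G)
    (A B : Finset ℕ) (g : ℕ → ℕ)
    (hgi : ∀ a ∈ A, ∀ a' ∈ A, g a = g a' → a = a')
    (hgm : ∀ a ∈ A, g a ∈ B) (hgs : ∀ b ∈ B, ∃ a ∈ A, g a = b)
    (hAdom : ∀ p ∈ G, p.1 ∉ A) (hBrng : ∀ p ∈ G, p.2 ∉ B)
    (hAcl : ∀ a ∈ A, ∀ x, ρ a x → x ∈ A)
    (hBcl : ∀ b ∈ B, ∀ y, σ b y ↔ y ∈ B) :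
    Good ρ σ (G ∪ A.image (fun a => (a, g a))) := by
  obtain ⟨hinj, hdcl, hrcl, hresp⟩ := hG
  have hmem : ∀ p, p ∈ G ∪ A.image (fun a => (a, g a)) ↔
      p ∈ G ∨ ∃ a ∈ A, p = (a, g a) := by
    intro p
    simp only [Finset.mem_union, Finset.mem_image]
    constructor
    · rintro (h | ⟨a, ha, rfl⟩)
      · exact Or.inl h
      · exact Or.inr ⟨a, ha, rfl⟩
    · rintro (h | ⟨a, ha, rfl⟩)
      · exact Or.inl h
      · exact Or.inr ⟨a, ha, rfl⟩
  refine ⟨?_, ?_, ?_, ?_⟩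
  · intro p hp q hq
    rcases (hmem p).1 hp with hpG | ⟨a, ha, rfl⟩ <;>
      rcases (hmem q).1 hq with hqG | ⟨a', ha', rfl⟩
    · exact hinj p hpG q hqG
    · constructor
      · intro h; have := hAdom p hpG; rw [h] at this; exact absurd ha' (by simpa using this)
      · intro h; have := hBrng p hpG; rw [h] at this; exact absurd (hgm a' ha') (by simpa using this)
    · constructor
      · intro h; have := hAdom q hqG; rw [← h] at this; exact absurd ha (by simpa using this)
      · intro h; have := hBrng q hqG; rw [← h] at this; exact absurd (hgm a ha) (by simpa using this)
    · simp only
      constructor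
      · intro h; rw [h]
      · intro h; exact hgi a ha a' ha' h
  · intro p hp x hx
    rcases (hmem p).1 hp with hpG | ⟨a, ha, rfl⟩
    · obtain ⟨q, hq, hq1⟩ := hdcl p hpG x hx
      exact ⟨q, Finset.mem_union_left _ hq, hq1⟩
    · have hxA : x ∈ A := hAcl a ha x hx
      exact ⟨(x, g x), (hmem _).2 (Or.inr ⟨x, hxA, rfl⟩), rfl⟩
  · intro p hp y hy
    rcases (hmem p).1 hp with hpG | ⟨a, ha, rfl⟩
    · obtain ⟨q, hq, hq2⟩ := hrcl p hpG y hy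
      exact ⟨q, Finset.mem_union_left _ hq, hq2⟩
    · have hyB : y ∈ B := (hBcl (g a) (hgm a ha) y).1 hy
      obtain ⟨a', ha', rfl⟩ := hgs y hyB
      exact ⟨(a', g a'), (hmem _).2 (Or.inr ⟨a', ha', rfl⟩), rfl⟩
  · intro p hp q hq hpq
    rcases (hmem p).1 hp with hpG | ⟨a, ha, rfl⟩ <;>
      rcases (hmem q).1 hq with hqG | ⟨a', ha', rfl⟩
    · exact hresp p hpG q hqG hpq
    · obtain ⟨r, hr, hr1⟩ := hdcl p hpG a' hpq
      have := hAdom r hr; rw [hr1] at this; exact absurd ha' this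
    · obtain ⟨r, hr, hr1⟩ := hdcl q hqG a (hρ.symm hpq)
      have := hAdom r hr; rw [hr1] at this; exact absurd ha this
    · exact (hBcl (g a) (hgm a ha) (g a')).2 (hgm a' ha')

end FinCase

section Ext
variable {ρ σ : ℕ → ℕ → Prop}

lemma extendDom (hρ : Equivalence ρ) (hσ : Equivalence σ)
    (hfρ : AllClassesFinite ρ) (hfσ : AllClassesFinite σ)
    (hsing : {x : ℕ | ∀ y, ρ x y → y = x}.Infinite)
    (hub : ∀ n : ℕ, ∃ x, ∃ s : Finset ℕ, n ≤ s.card ∧ ∀ y ∈ s, σ x y)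
    {G : Finset (ℕ × ℕ)} (hG : Good ρ σ G) (n : ℕ) :
    ∃ G', G ⊆ G' ∧ Good ρ σ G' ∧ ∃ p ∈ G', p.1 = n := by
  by_cases hn : ∃ p ∈ G, p.1 = n
  · exact ⟨G, subset_rfl, hG, hn⟩
  · set C : Finset ℕ := (hfρ n).toFinset with hCdef
    have hmemC : ∀ x, x ∈ C ↔ ρ n x := fun x => Set.Finite.mem_toFinset _
    have hnC : n ∈ C := (hmemC n).2 (hρ.refl n)
    obtain ⟨x, s, hscard, hsx⟩ := hub (C.card + G.card + 1)
    set D : Finset ℕ := (hfσ x).toFinset with hDdef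
    have hmemD : ∀ y, y ∈ D ↔ σ x y := fun y => Set.Finite.mem_toFinset _
    have hsD : s ⊆ D := fun y hy => (hmemD y).2 (hsx y hy)
    have hDcard : C.card + G.card + 1 ≤ D.card := hscard.trans (Finset.card_le_card hsD)
    have hBrng : ∀ p ∈ G, p.2 ∉ D := by
      intro p hp hpD
      have hsub : D ⊆ G.image Prod.snd := by
        intro d hd
        obtain ⟨q, hq, hq2⟩ := hG.2.2.1 p hp d
          (hσ.trans (hσ.symm ((hmemD _).1 hpD)) ((hmemD _).1 hd))
        exact Finset.mem_image.mpr ⟨q, hq, hq2⟩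
      have h1 := Finset.card_le_card hsub
      have h2 := Finset.card_image_le (s := G) (f := Prod.snd)
      omega
    have hinf : ({x : ℕ | ∀ y, ρ x y → y = x} \ ↑(G.image Prod.fst ∪ C)).Infinite :=
      hsing.diff (Finset.finite_toSet _)
    obtain ⟨P, hPsub, hPcard⟩ := hinf.exists_subset_card_eq (D.card - C.card)
    have hPsing : ∀ a ∈ P, ∀ y, ρ a y → y = a := fun a ha => (hPsub ha).1
    have hPnot : ∀ a ∈ P, a ∉ G.image Prod.fst ∧ a ∉ C := by
      intro a ha
      have := (hPsub ha).2
      simp only [Finset.coe_union, Set.mem_union, Finset.mem_coe] at this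
      push_neg at this
      exact this
    have hCdom : ∀ p ∈ G, p.1 ∉ C := by
      intro p hp hpC
      obtain ⟨q, hq, hq1⟩ := hG.2.1 p hp n (hρ.symm ((hmemC _).1 hpC))
      exact hn ⟨q, hq, hq1⟩
    have hdisj : Disjoint C P := by
      rw [Finset.disjoint_right]
      intro a ha
      exact (hPnot a ha).2
    set A := C ∪ P with hAdef
    have hAcard : A.card = D.card := by
      rw [hAdef, Finset.card_union_of_disjoint hdisj]
      omega
    let e := Finset.equivOfCardEq hAcard
    set g : ℕ → ℕ := fun a => if h : a ∈ A then (e ⟨a, h⟩ : ℕ) else 0 with hgdef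
    have hgval : ∀ a (h : a ∈ A), g a = (e ⟨a, h⟩ : ℕ) := fun a h => dif_pos h
    have hgood : Good ρ σ (G ∪ A.image (fun a => (a, g a))) := by
      refine addBlock hρ hG A D g ?_ ?_ ?_ ?_ hBrng ?_ ?_
      · intro a ha a' ha' h
        rw [hgval a ha, hgval a' ha'] at h
        have := e.injective (Subtype.ext h)
        exact congrArg Subtype.val this
      · intro a ha
        rw [hgval a ha]
        exact (e ⟨a, ha⟩).2
      · intro b hb
        refine ⟨(e.symm ⟨b, hb⟩ : ℕ), (e.symm ⟨b, hb⟩).2, ?_⟩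
        rw [hgval _ (e.symm ⟨b, hb⟩).2, Subtype.coe_eta, Equiv.apply_symm_apply]
      · intro p hp hpA
        rcases Finset.mem_union.1 hpA with h | h
        · exact hCdom p hp h
        · exact (hPnot _ h).1 (Finset.mem_image.mpr ⟨p, hp, rfl⟩)
      · intro a ha z hz
        rcases Finset.mem_union.1 ha with h | h
        · exact Finset.mem_union_left _ ((hmemC z).2 (hρ.trans ((hmemC a).1 h) hz))
        · rw [hPsing a h z hz]; exact ha
      · intro b hb y
        constructor
        · intro h; exact (hmemD y).2 (hσ.trans ((hmemD b).1 hb) h)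
        · intro h; exact hσ.trans (hσ.symm ((hmemD b).1 hb)) ((hmemD y).1 h)
    refine ⟨G ∪ A.image (fun a => (a, g a)), Finset.subset_union_left, hgood,
      ⟨(n, g n), ?_, rfl⟩⟩
    exact Finset.mem_union_right _ (Finset.mem_image.mpr ⟨n, Finset.mem_union_left _ hnC, rfl⟩)

lemma extendRng (hρ : Equivalence ρ) (hσ : Equivalence σ)
    (hfσ : AllClassesFinite σ)
    (hsing : {x : ℕ | ∀ y, ρ x y → y = x}.Infinite)
    {G : Finset (ℕ × ℕ)} (hG : Good ρ σ G) (n : ℕ) :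
    ∃ G', G ⊆ G' ∧ Good ρ σ G' ∧ ∃ p ∈ G', p.2 = n := by
  by_cases hn : ∃ p ∈ G, p.2 = n
  · exact ⟨G, subset_rfl, hG, hn⟩
  · set D : Finset ℕ := (hfσ n).toFinset with hDdef
    have hmemD : ∀ y, y ∈ D ↔ σ n y := fun y => Set.Finite.mem_toFinset _
    have hnD : n ∈ D := (hmemD n).2 (hσ.refl n)
    have hBrng : ∀ p ∈ G, p.2 ∉ D := by
      intro p hp hpD
      obtain ⟨q, hq, hq2⟩ := hG.2.2.1 p hp n (hσ.symm ((hmemD _).1 hpD))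
      exact hn ⟨q, hq, hq2⟩
    have hinf : ({x : ℕ | ∀ y, ρ x y → y = x} \ ↑(G.image Prod.fst)).Infinite :=
      hsing.diff (Finset.finite_toSet _)
    obtain ⟨P, hPsub, hPcard⟩ := hinf.exists_subset_card_eq D.card
    have hPsing : ∀ a ∈ P, ∀ y, ρ a y → y = a := fun a ha => (hPsub ha).1
    have hPnot : ∀ a ∈ P, a ∉ G.image Prod.fst := by
      intro a ha
      have := (hPsub ha).2
      simpa using this
    let e := Finset.equivOfCardEq hPcard
    set g : ℕ → ℕ := fun a => if h : a ∈ P then (e ⟨a, h⟩ : ℕ) else 0 with hgdef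
    have hgval : ∀ a (h : a ∈ P), g a = (e ⟨a, h⟩ : ℕ) := fun a h => dif_pos h
    have hgood : Good ρ σ (G ∪ P.image (fun a => (a, g a))) := by
      refine addBlock hρ hG P D g ?_ ?_ ?_ ?_ hBrng ?_ ?_
      · intro a ha a' ha' h
        rw [hgval a ha, hgval a' ha'] at h
        exact congrArg Subtype.val (e.injective (Subtype.ext h))
      · intro a ha
        rw [hgval a ha]
        exact (e ⟨a, ha⟩).2
      · intro b hb
        refine ⟨(e.symm ⟨b, hb⟩ : ℕ), (e.symm ⟨b, hb⟩).2, ?_⟩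
        rw [hgval _ (e.symm ⟨b, hb⟩).2, Subtype.coe_eta, Equiv.apply_symm_apply]
      · intro p hp hpA
        exact (hPnot _ hpA) (Finset.mem_image.mpr ⟨p, hp, rfl⟩)
      · intro a ha z hz
        rw [hPsing a ha z hz]; exact ha
      · intro b hb y
        constructor
        · intro h; exact (hmemD y).2 (hσ.trans ((hmemD b).1 hb) h)
        · intro h; exact hσ.trans (hσ.symm ((hmemD b).1 hb)) ((hmemD y).1 h)
    refine ⟨G ∪ P.image (fun a => (a, g a)), Finset.subset_union_left, hgood, ?_⟩
    obtain ⟨a, ha, hga⟩ : ∃ a ∈ P, g a = n := by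
      refine ⟨(e.symm ⟨n, hnD⟩ : ℕ), (e.symm ⟨n, hnD⟩).2, ?_⟩
      rw [hgval _ (e.symm ⟨n, hnD⟩).2, Subtype.coe_eta, Equiv.apply_symm_apply]
    exact ⟨(a, g a), Finset.mem_union_right _ (Finset.mem_image.mpr ⟨a, ha, rfl⟩), hga⟩

lemma extendBoth (hρ : Equivalence ρ) (hσ : Equivalence σ)
    (hfρ : AllClassesFinite ρ) (hfσ : AllClassesFinite σ)
    (hsing : {x : ℕ | ∀ y, ρ x y → y = x}.Infinite)
    (hub : ∀ n : ℕ, ∃ x, ∃ s : Finset ℕ, n ≤ s.card ∧ ∀ y ∈ s, σ x y)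
    {G : Finset (ℕ × ℕ)} (hG : Good ρ σ G) (n : ℕ) :
    ∃ G', G ⊆ G' ∧ Good ρ σ G' ∧ (∃ p ∈ G', p.1 = n) ∧ (∃ p ∈ G', p.2 = n) := by
  obtain ⟨G₁, h1, hG1, hd⟩ := extendDom hρ hσ hfρ hfσ hsing hub hG n
  obtain ⟨G₂, h2, hG2, hr⟩ := extendRng hρ hσ hfσ hsing hG1 n
  obtain ⟨p, hp, hp1⟩ := hd
  exact ⟨G₂, h1.trans h2, hG2, ⟨p, h2 hp, hp1⟩, hr⟩

end Ext

section Chain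
variable {ρ σ : ℕ → ℕ → Prop}

noncomputable def chain
    (step : {G : Finset (ℕ × ℕ) // Good ρ σ G} → ℕ → {G : Finset (ℕ × ℕ) // Good ρ σ G}) :
    ℕ → {G : Finset (ℕ × ℕ) // Good ρ σ G}
  | 0 => ⟨∅, good_empty ρ σ⟩
  | n + 1 => step (chain step n) n

lemma condenses_nat (hρ : Equivalence ρ) (hσ : Equivalence σ)
    (hfρ : AllClassesFinite ρ) (hfσ : AllClassesFinite σ)
    (hsing : {x : ℕ | ∀ y, ρ x y → y = x}.Infinite)
    (hub : ∀ n : ℕ, ∃ x, ∃ s : Finset ℕ, n ≤ s.card ∧ ∀ y ∈ s, σ x y) :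
    ∃ f : ℕ → ℕ, Function.Bijective f ∧ ∀ a b, ρ a b → σ (f a) (f b) := by
  have hext := fun (p : {G : Finset (ℕ × ℕ) // Good ρ σ G}) (n : ℕ) =>
    extendBoth hρ hσ hfρ hfσ hsing hub p.2 n
  choose G' hsub hgood hdom hrng using hext
  set step : {G : Finset (ℕ × ℕ) // Good ρ σ G} → ℕ → {G : Finset (ℕ × ℕ) // Good ρ σ G} :=
    fun p n => ⟨G' p n, hgood p n⟩ with hstep
  have hchain : ∀ n, chain step (n + 1) = step (chain step n) n := fun n => rfl
  have hmono : ∀ m k, m ≤ k → (chain step m).1 ⊆ (chain step k).1 := by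
    intro m k hmk
    induction k with
    | zero =>
      have : m = 0 := Nat.le_zero.1 hmk
      subst this; exact subset_rfl
    | succ k ih =>
      rcases Nat.lt_or_ge m (k + 1) with h | h
      · refine (ih (Nat.lt_succ_iff.1 h)).trans ?_
        rw [hchain k]
        exact hsub _ _
      · have : m = k + 1 := le_antisymm hmk h
        subst this; exact subset_rfl
  have hdom' : ∀ n, ∃ p, p ∈ (chain step (n + 1)).1 ∧ p.1 = n := by
    intro n
    rw [hchain n]
    obtain ⟨p, hp, hp1⟩ := hdom (chain step n) n
    exact ⟨p, hp, hp1⟩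
  choose pf hpmem hpfst using hdom'
  set f : ℕ → ℕ := fun n => (pf n).2 with hfdef
  have hpair : ∀ n, (n, f n) ∈ (chain step (n + 1)).1 := by
    intro n
    have heq : pf n = (n, f n) := by
      have h1 := hpfst n
      have h2 : (pf n).2 = f n := rfl
      cases hp : pf n
      rw [hp] at h1 h2
      simp only [Prod.mk.injEq]
      exact ⟨h1, h2⟩
    rw [← heq]
    exact hpmem n
  have huniq : ∀ k, ∀ p ∈ (chain step k).1, p.2 = f p.1 := by
    intro k p hp
    have h1 : p ∈ (chain step (max k (p.1 + 1))).1 := hmono k _ (le_max_left _ _) hp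
    have h2 : (p.1, f p.1) ∈ (chain step (max k (p.1 + 1))).1 :=
      hmono (p.1 + 1) _ (le_max_right _ _) (hpair p.1)
    exact ((chain step (max k (p.1 + 1))).2.1 p h1 (p.1, f p.1) h2).1 rfl
  refine ⟨f, ⟨?_, ?_⟩, ?_⟩
  · intro a b hab
    have h1 : (a, f a) ∈ (chain step (max (a + 1) (b + 1))).1 :=
      hmono (a + 1) _ (le_max_left _ _) (hpair a)
    have h2 : (b, f b) ∈ (chain step (max (a + 1) (b + 1))).1 :=
      hmono (b + 1) _ (le_max_right _ _) (hpair b)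
    exact ((chain step (max (a + 1) (b + 1))).2.1 (a, f a) h1 (b, f b) h2).2 hab
  · intro y
    have hy : ∃ p, p ∈ (chain step (y + 1)).1 ∧ p.2 = y := by
      rw [hchain y]
      obtain ⟨p, hp, hp2⟩ := hrng (chain step y) y
      exact ⟨p, hp, hp2⟩
    obtain ⟨p, hp, hp2⟩ := hy
    exact ⟨p.1, by rw [← huniq (y + 1) p hp, hp2]⟩
  · intro a b hab
    have h1 : (a, f a) ∈ (chain step (max (a + 1) (b + 1))).1 :=
      hmono (a + 1) _ (le_max_left _ _) (hpair a)
    have h2 : (b, f b) ∈ (chain step (max (a + 1) (b + 1))).1 :=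
      hmono (b + 1) _ (le_max_right _ _) (hpair b)
    exact (chain step (max (a + 1) (b + 1))).2.2.2.2 (a, f a) h1 (b, f b) h2 hab

end Chain

lemma fwd {X Y : Type} {ρ : X → X → Prop} {σ : Y → Y → Prop}
    (h : Condenses ρ σ) (hρinf : ¬ AllClassesFinite ρ) : ¬ AllClassesFinite σ := by
  obtain ⟨f, hfb, hresp⟩ := h
  simp only [AllClassesFinite, not_forall] at hρinf ⊢
  obtain ⟨x, hx⟩ := hρinf
  refine ⟨f x, fun hfin => hx ?_⟩
  exact (hfin.preimage hfb.1.injOn).subset fun y hy => hresp x y hy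

lemma condenses_of_fin {X Y : Type} {ρ : X → X → Prop} {σ : Y → Y → Prop}
    (hX : InClassC ρ) (hY : InClassC σ)
    (hfρ : AllClassesFinite ρ) (hfσ : AllClassesFinite σ) : Condenses ρ σ := by
  obtain ⟨hcX, hiX, hρ, hsingX, -⟩ := hX
  obtain ⟨hcY, hiY, hσ, -, hubY⟩ := hY
  haveI := hcX; haveI := hiX; haveI := hcY; haveI := hiY
  obtain ⟨eX⟩ : Nonempty (ℕ ≃ X) := nonempty_equiv_of_countable
  obtain ⟨eY⟩ : Nonempty (ℕ ≃ Y) := nonempty_equiv_of_countable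
  set ρ' : ℕ → ℕ → Prop := fun m n => ρ (eX m) (eX n) with hρ'def
  set σ' : ℕ → ℕ → Prop := fun m n => σ (eY m) (eY n) with hσ'def
  have hρ'e : Equivalence ρ' :=
    ⟨fun _ => hρ.refl _, fun h => hρ.symm h, fun h h' => hρ.trans h h'⟩
  have hσ'e : Equivalence σ' :=
    ⟨fun _ => hσ.refl _, fun h => hσ.symm h, fun h h' => hσ.trans h h'⟩
  have hfρ' : AllClassesFinite ρ' := fun n => (hfρ (eX n)).preimage eX.injective.injOn
  have hfσ' : AllClassesFinite σ' := fun n => (hfσ (eY n)).preimage eY.injective.injOn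
  have hsing' : {m : ℕ | ∀ k, ρ' m k → k = m}.Infinite := by
    have hset : {m : ℕ | ∀ k, ρ' m k → k = m} = eX ⁻¹' {x : X | ∀ y, ρ x y → y = x} := by
      ext m
      simp only [Set.mem_setOf_eq, Set.mem_preimage, hρ'def]
      constructor
      · intro h y hy
        have h1 : ρ (eX m) (eX (eX.symm y)) := by rwa [Equiv.apply_symm_apply]
        have h2 := h (eX.symm y) h1
        have := congrArg eX h2
        simpa using this
      · intro h k hk
        exact eX.injective (h (eX k) hk)
    rw [hset]
    exact hsingX.preimage (fun x _ => ⟨eX.symm x, eX.apply_symm_apply x⟩)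
  have hub' : ∀ n : ℕ, ∃ x, ∃ s : Finset ℕ, n ≤ s.card ∧ ∀ y ∈ s, σ' x y := by
    intro n
    obtain ⟨x, s, hcard, hs⟩ := hubY n
    refine ⟨eY.symm x, s.image eY.symm, ?_, ?_⟩
    · rw [Finset.card_image_of_injective _ eY.symm.injective]; exact hcard
    · intro m hm
      obtain ⟨y, hy, rfl⟩ := Finset.mem_image.1 hm
      show σ (eY (eY.symm x)) (eY (eY.symm y))
      simpa using hs y hy
  obtain ⟨f', hbij, hresp⟩ := condenses_nat hρ'e hσ'e hfρ' hfσ' hsing' hub'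
  refine ⟨fun x => eY (f' (eX.symm x)), ?_, ?_⟩
  · exact (eY.bijective.comp hbij).comp eX.symm.bijective
  · intro a b hab
    refine hresp _ _ ?_
    show ρ (eX (eX.symm a)) (eX (eX.symm b))
    simpa using hab

lemma condenses_to_inf {X Y : Type} {ρ : X → X → Prop} {σ : Y → Y → Prop}
    (hX : InClassC ρ) (hY : InClassC σ)
    (hXinf : ¬ AllClassesFinite ρ) (hYinf : ¬ AllClassesFinite σ) : Condenses ρ σ := by
  classical
  obtain ⟨hcX, hiX, hρ, hsingX, -⟩ := hX
  obtain ⟨hcY, hiY, hσ, -, -⟩ := hY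
  haveI := hcX; haveI := hcY
  simp only [AllClassesFinite, not_forall] at hXinf hYinf
  obtain ⟨x₀, hx₀⟩ := hXinf
  obtain ⟨y₀, hy₀⟩ := hYinf
  have hx₀' : {y | ρ x₀ y}.Infinite := hx₀
  have hy₀' : {y | σ y₀ y}.Infinite := hy₀
  set S : Set X := {x | ∀ y, ρ x y → y = x} with hSdef
  set D : Set Y := {y | σ y₀ y} with hDdef
  have hSc : ({y | ρ x₀ y} : Set X) ⊆ Sᶜ := by
    intro z hz hzS
    obtain ⟨a, ha, b, hb, hab⟩ := hx₀'.nontrivial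
    have key : ∀ w, w ∈ {y | ρ x₀ y} → w = z := fun w hw => hzS w (hρ.trans (hρ.symm hz) hw)
    exact hab ((key a ha).trans (key b hb).symm)
  have key : ∀ S' : Set X, S' ⊆ S → (↥S' ≃ ↥(Dᶜ)) → Condenses ρ σ := by
    intro S' hsub e₁
    have hc1 : (S'ᶜ : Set X).Infinite :=
      ((hx₀'.mono hSc).mono (Set.compl_subset_compl.2 hsub))
    haveI : Infinite ↥(S'ᶜ) := hc1.to_subtype
    haveI : Infinite ↥D := hy₀'.to_subtype
    obtain ⟨e₂⟩ : Nonempty (↥(S'ᶜ) ≃ ↥D) := nonempty_equiv_of_countable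
    let e : X ≃ Y :=
      (Equiv.Set.sumCompl S').symm.trans ((e₁.sumCongr e₂).trans
        ((Equiv.sumComm _ _).trans (Equiv.Set.sumCompl D)))
    have hmap : ∀ x (hx : x ∉ S'), e x ∈ D := by
      intro x hx
      have h1 : (Equiv.Set.sumCompl S').symm x = Sum.inr ⟨x, hx⟩ :=
        Equiv.Set.sumCompl_symm_apply_of_notMem hx
      show e x ∈ D
      simp only [e, Equiv.trans_apply, h1, Equiv.sumCongr_apply, Sum.map_inr,
        Equiv.sumComm_apply, Sum.swap_inr, Equiv.Set.sumCompl_apply_inl]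
      exact (e₂ ⟨x, hx⟩).2
    refine ⟨e, e.bijective, ?_⟩
    intro a b hab
    by_cases ha : a ∈ S'
    · have hba : b = a := hsub ha b hab
      rw [hba]
      exact hσ.refl _
    · have hb : b ∉ S' := by
        intro hb
        have hba : a = b := hsub hb a (hρ.symm hab)
        exact ha (by rw [hba]; exact hb)
      exact hσ.trans (hσ.symm (hmap a ha)) (hmap b hb)
  by_cases hT : (Dᶜ : Set Y).Finite
  · obtain ⟨P, hPsub, hPcard⟩ := hsingX.exists_subset_card_eq hT.toFinset.card
    refine key ↑P (fun x hx => hPsub hx) ?_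
    exact (Equiv.subtypeEquivRight (fun x => Finset.mem_coe)).trans
      ((Finset.equivOfCardEq hPcard).trans
        (Equiv.subtypeEquivRight (fun y => hT.mem_toFinset)))
  · have hTinf : (Dᶜ : Set Y).Infinite := hT
    haveI : Infinite ↥(Dᶜ) := hTinf.to_subtype
    haveI : Infinite ↥S := hsingX.to_subtype
    obtain ⟨e₁⟩ : Nonempty (↥S ≃ ↥(Dᶜ)) := nonempty_equiv_of_countable
    exact key S subset_rfl e₁


theorem stmt_19 {X Y : Type} (ρ : X → X → Prop) (σ : Y → Y → Prop)
    (hX : InClassC ρ) (hY : InClassC σ) :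
    (Condenses ρ σ ∧ Condenses σ ρ) ↔
      ((AllClassesFinite ρ ∧ AllClassesFinite σ) ∨
        (¬ AllClassesFinite ρ ∧ ¬ AllClassesFinite σ)) := by
  constructor
  · rintro ⟨h1, h2⟩
    by_cases hρ : AllClassesFinite ρ
    · left
      refine ⟨hρ, ?_⟩
      by_contra hσ
      exact fwd h2 hσ hρ
    · right
      exact ⟨hρ, fwd h1 hρ⟩
  · rintro (⟨h1, h2⟩ | ⟨h1, h2⟩)
    · exact ⟨condenses_of_fin hX hY h1 h2, condenses_of_fin hY hX h2 h1⟩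
    · exact ⟨condenses_to_inf hX hY h1 h2, condenses_to_inf hY hX h2 h1⟩
end
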